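/- arXiv:1801.00925 — 3 statements merged into one kernel-verified Lean document; each statement's English description precedes it below -/
import Mathlib

section
/- Let Ω ⊆ ℂ be a simply connected domain, A holomorphic on Ω, γ : [0, ∞) → Ω a path tending to infinity with starting point y₀, satisfying ∫_γ (1 + |t|) |t A(t)| |dt| ≤ 1/2. If v solves v'' + A v = 0 on Ω, then v(z) = O(|z|) as z → ∞ along γ. More precisely, if v(z) = a₁ z + b₁ − ∫_{y₀}^z (z − t) A(t) v(t) dt along γ and |z| ≥ 1 on γ, then sup_{z ∈ γ} |v(z)/z| ≤ 2(|a₁| + |b₁|). -/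
open Set Filter MeasureTheory

/-- Gronwall-type bound: a solution of `v'' + A v = 0` satisfying the stated
integral representation along a path `γ` tending to infinity, with small
weighted arc-length integral, satisfies `|v(z)/z| ≤ 2(|a₁|+|b₁|)` on `γ`. -/
theorem stmt_11 (Ω : Set ℂ) (hΩ : IsOpen Ω) (A v : ℂ → ℂ)
    (hA : AnalyticOnNhd ℂ A Ω) (hv : AnalyticOnNhd ℂ v Ω)
    (hode : ∀ z ∈ Ω, iteratedDeriv 2 v z + A z * v z = 0)
    (γ : ℝ → ℂ) (hγd : Differentiable ℝ γ)
    (hγΩ : ∀ t, 0 ≤ t → γ t ∈ Ω)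
    (hγinf : Tendsto (fun t => ‖γ t‖) atTop atTop)
    (hγ1 : ∀ t, 0 ≤ t → 1 ≤ ‖γ t‖)
    (hintble : IntegrableOn
      (fun τ => (1 + ‖γ τ‖) * ‖γ τ * A (γ τ)‖ * ‖deriv γ τ‖) (Set.Ioi 0))
    (hint : (∫ τ in Set.Ioi (0:ℝ),
      (1 + ‖γ τ‖) * ‖γ τ * A (γ τ)‖ * ‖deriv γ τ‖) ≤ 1 / 2)
    (a₁ b₁ : ℂ)
    (hrep : ∀ t, 0 ≤ t → v (γ t) = a₁ * γ t + b₁ -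
      ∫ τ in Set.Ioc (0:ℝ) t, (γ t - γ τ) * A (γ τ) * v (γ τ) * deriv γ τ) :
    ∀ t, 0 ≤ t → ‖v (γ t) / γ t‖ ≤ 2 * (‖a₁‖ + ‖b₁‖) := by
  intro t ht
  have hγcont : Continuous γ := hγd.continuous
  have hγne : ∀ s, 0 ≤ s → γ s ≠ 0 := by
    intro s hs h
    have := hγ1 s hs
    rw [h] at this; simp at this; linarith
  set φ : ℝ → ℝ := fun s => ‖v (γ s) / γ s‖ with hφdef
  have hφcont : ContinuousOn φ (Set.Icc 0 t) := by
    apply ContinuousOn.norm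
    apply ContinuousOn.div
    · intro s hs
      exact ((hv (γ s) (hγΩ s hs.1)).continuousAt.comp hγcont.continuousAt).continuousWithinAt
    · exact hγcont.continuousOn
    · intro s hs; exact hγne s hs.1
  obtain ⟨t₀, ht₀mem, ht₀max⟩ :=
    (isCompact_Icc : IsCompact (Icc (0:ℝ) t)).exists_isMaxOn ⟨0, le_refl 0, ht⟩ hφcont
  set S := φ t₀ with hSdef
  have hS0 : 0 ≤ S := norm_nonneg _
  have ht₀0 : 0 ≤ t₀ := ht₀mem.1
  have hφt : φ t ≤ S := ht₀max ⟨ht, le_refl t⟩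
  -- main estimate at t₀
  set a : ℝ := ‖γ t₀‖ with hadef
  have ha1 : 1 ≤ a := hγ1 t₀ ht₀0
  set w : ℝ → ℝ := fun τ => (1 + ‖γ τ‖) * ‖γ τ * A (γ τ)‖ * ‖deriv γ τ‖ with hwdef
  have hwnn : ∀ τ, 0 ≤ w τ := fun τ => by
    apply mul_nonneg (mul_nonneg _ (norm_nonneg _)) (norm_nonneg _)
    positivity
  have hwint : IntegrableOn w (Set.Ioc 0 t₀) := hintble.mono_set Set.Ioc_subset_Ioi_self
  set f : ℝ → ℂ := fun τ => (γ t₀ - γ τ) * A (γ τ) * v (γ τ) * deriv γ τ with hfdef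
  -- pointwise bound on Ioc 0 t₀
  have hbound : ∀ τ ∈ Set.Ioc (0:ℝ) t₀, ‖f τ‖ ≤ a * S * w τ := by
    intro τ hτ
    have hτ0 : 0 ≤ τ := hτ.1.le
    have hb1 : 1 ≤ ‖γ τ‖ := hγ1 τ hτ0
    have hφτ : φ τ ≤ S := ht₀max ⟨hτ0, hτ.2.trans ht₀mem.2⟩
    have hvτ : ‖v (γ τ)‖ = φ τ * ‖γ τ‖ := by
      rw [hφdef]
      simp only
      rw [← norm_mul, div_mul_cancel₀ _ (hγne τ hτ0)]
    have h1 : ‖f τ‖ = ‖γ t₀ - γ τ‖ * ‖A (γ τ)‖ * ‖v (γ τ)‖ * ‖deriv γ τ‖ := by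
      simp [hfdef, norm_mul]
    rw [h1, hvτ, hwdef]
    have h2 : ‖γ t₀ - γ τ‖ ≤ a + ‖γ τ‖ := norm_sub_le _ _
    have h3 : a + ‖γ τ‖ ≤ a * (1 + ‖γ τ‖) := by nlinarith
    calc ‖γ t₀ - γ τ‖ * ‖A (γ τ)‖ * (φ τ * ‖γ τ‖) * ‖deriv γ τ‖
        ≤ (a * (1 + ‖γ τ‖)) * ‖A (γ τ)‖ * (S * ‖γ τ‖) * ‖deriv γ τ‖ := by
          gcongr
          exact h2.trans h3
      _ = a * S * ((1 + ‖γ τ‖) * (‖γ τ‖ * ‖A (γ τ)‖) * ‖deriv γ τ‖) := by ring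
      _ = a * S * ((1 + ‖γ τ‖) * ‖γ τ * A (γ τ)‖ * ‖deriv γ τ‖) := by rw [norm_mul]
  -- norm of the integral
  have hgint : IntegrableOn (fun τ => a * S * w τ) (Set.Ioc 0 t₀) := (hwint.const_mul _)
  have hmeas : AEStronglyMeasurable f (volume.restrict (Set.Ioc 0 t₀)) := by
    have hc : ContinuousOn (fun τ => (γ t₀ - γ τ) * A (γ τ) * v (γ τ)) (Set.Ioc 0 t₀) := by
      apply ContinuousOn.mul
      apply ContinuousOn.mul
      · exact (continuous_const.sub hγcont).continuousOn
      · intro s hs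
        exact ((hA (γ s) (hγΩ s hs.1.le)).continuousAt.comp hγcont.continuousAt).continuousWithinAt
      · intro s hs
        exact ((hv (γ s) (hγΩ s hs.1.le)).continuousAt.comp hγcont.continuousAt).continuousWithinAt
    exact (hc.aestronglyMeasurable measurableSet_Ioc).mul
      (measurable_deriv γ).aestronglyMeasurable.restrict
  have hae : ∀ᵐ τ ∂(volume.restrict (Set.Ioc 0 t₀)), ‖f τ‖ ≤ a * S * w τ := by
    filter_upwards [ae_restrict_mem measurableSet_Ioc] with τ hτ using hbound τ hτ
  have hnormint : ‖∫ τ in Set.Ioc (0:ℝ) t₀, f τ‖ ≤ ∫ τ in Set.Ioc (0:ℝ) t₀, a * S * w τ :=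
    norm_integral_le_of_norm_le hgint hae
  have hwle : ∫ τ in Set.Ioc (0:ℝ) t₀, w τ ≤ 1 / 2 := by
    refine le_trans ?_ hint
    apply setIntegral_mono_set hintble
    · filter_upwards with τ using hwnn τ
    · exact HasSubset.Subset.eventuallyLE Set.Ioc_subset_Ioi_self
  have hI : ‖∫ τ in Set.Ioc (0:ℝ) t₀, f τ‖ ≤ a * S * (1 / 2) := by
    refine hnormint.trans ?_
    rw [MeasureTheory.integral_const_mul]
    exact mul_le_mul_of_nonneg_left hwle (mul_nonneg (by linarith) hS0)
  -- conclude bound on S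
  have hrep₀ := hrep t₀ ht₀0
  have hSbound : S ≤ ‖a₁‖ + ‖b₁‖ + S / 2 := by
    have hne : γ t₀ ≠ 0 := hγne t₀ ht₀0
    have : φ t₀ = ‖a₁ + b₁ / γ t₀ - (∫ τ in Set.Ioc (0:ℝ) t₀, f τ) / γ t₀‖ := by
      rw [hφdef]; simp only
      rw [hrep₀]
      congr 1
      field_simp
      rfl
    rw [hSdef, this]
    have h4 : ‖a₁ + b₁ / γ t₀ - (∫ τ in Set.Ioc (0:ℝ) t₀, f τ) / γ t₀‖
        ≤ ‖a₁‖ + ‖b₁ / γ t₀‖ + ‖(∫ τ in Set.Ioc (0:ℝ) t₀, f τ) / γ t₀‖ :=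
      (norm_sub_le _ _).trans (by gcongr; exact norm_add_le _ _)
    refine h4.trans ?_
    have h5 : ‖b₁ / γ t₀‖ ≤ ‖b₁‖ := by
      rw [norm_div]
      exact div_le_self (norm_nonneg _) ha1
    have h6 : ‖(∫ τ in Set.Ioc (0:ℝ) t₀, f τ) / γ t₀‖ ≤ S / 2 := by
      rw [norm_div]
      rw [div_le_iff₀ (by linarith : (0:ℝ) < a)]
      calc ‖∫ τ in Set.Ioc (0:ℝ) t₀, f τ‖ ≤ a * S * (1/2) := hI
        _ = S / 2 * a := by ring
    linarith
  have : S ≤ 2 * (‖a₁‖ + ‖b₁‖) := by linarith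
  calc ‖v (γ t) / γ t‖ = φ t := rfl
    _ ≤ S := hφt
    _ ≤ 2 * (‖a₁‖ + ‖b₁‖) := this
end

section
/- Let A be holomorphic on a simply connected domain Ω ⊆ ℂ containing a path γ tending to ∞, with |A(t)|^{-1/4} ≥ |t|² ≥ 4 on γ and ∫_γ |A(t)|^{1/4} |dt| < 1/4, and suppose |A(γ(s))| ≤ C |A(γ(t))|^{δ₀} for all s ≥ t (some C > 0, δ₀ ∈ (0,1)). If v is a solution of v'' + A v = 0 on Ω with v(z) = O(|z|) on γ and v(z) = α z + β + ∫_z^∞ (z − t) A(t) v(t) dt along γ, then for every N ∈ ℕ: v(z) − α z − β = O(|z|^{-N}) and v'(z) − α = O(|z|^{-N}) as z → ∞ along γ. -/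
open Set Filter MeasureTheory

lemma aux1 {a : ℝ} (ha : 0 < a) (h4 : 4 ≤ a ^ (-(1/4):ℝ)) :
    a ^ (1/4:ℝ) ≤ 1/4 ∧ a ≤ 1 := by
  have hq : 0 < a ^ (1/4:ℝ) := Real.rpow_pos_of_pos ha _
  have hneg : a ^ (-(1/4):ℝ) = (a ^ (1/4:ℝ))⁻¹ := by
    rw [Real.rpow_neg ha.le]
  rw [hneg] at h4
  have h1 : a ^ (1/4:ℝ) ≤ 1/4 := by
    have := (le_inv_comm₀ (by norm_num : (0:ℝ) < 4) hq).mp h4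
    linarith
  refine ⟨h1, ?_⟩
  have : a = (a ^ (1/4:ℝ)) ^ (4:ℕ) := by
    rw [← Real.rpow_natCast (a ^ (1/4:ℝ)) 4, ← Real.rpow_mul ha.le]
    norm_num
  rw [this]
  calc (a ^ (1/4:ℝ)) ^ (4:ℕ) ≤ (1/4:ℝ) ^ (4:ℕ) := by
        exact pow_le_pow_left₀ hq.le h1 4
    _ ≤ 1 := by norm_num

lemma aux2 {a n : ℝ} (ha : 0 < a) (hn : 0 ≤ n) (h : n^2 ≤ a ^ (-(1/4):ℝ)) :
    n ≤ a ^ (-(1/8):ℝ) := by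
  have h2 : a ^ (-(1/4):ℝ) = (a ^ (-(1/8):ℝ))^2 := by
    rw [← Real.rpow_natCast (a ^ (-(1/8):ℝ)) 2, ← Real.rpow_mul ha.le]
    norm_num
  rw [h2] at h
  exact (pow_le_pow_iff_left₀ hn (Real.rpow_pos_of_pos ha _).le (by norm_num)).mp h

lemma aux3 {a n c : ℝ} (N : ℕ) (ha : 0 < a) (hn : 2 ≤ n) (hc : 0 < c)
    (hratio : (N:ℝ)/c ≤ Real.log (1/a) / Real.log n) : a ^ c * n ^ N ≤ 1 := by
  have hnpos : (0:ℝ) < n := by linarith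
  have hlogn : 0 < Real.log n := Real.log_pos (by linarith)
  have h1 : (N:ℝ)/c * Real.log n ≤ Real.log (1/a) := by
    rw [div_le_div_iff₀ (by positivity) hlogn] at hratio
    calc (N:ℝ)/c * Real.log n = (N:ℝ) * Real.log n / c := by ring
      _ ≤ Real.log (1/a) := by
        rw [div_le_iff₀ hc]; linarith
  have hlogi : Real.log (1/a) = -Real.log a := by
    rw [one_div, Real.log_inv]
  have h2 : Real.log a * c + (N:ℝ) * Real.log n ≤ 0 := by
    rw [hlogi] at h1
    have : (N:ℝ)/c * Real.log n * c = (N:ℝ) * Real.log n := by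
      field_simp
    nlinarith [h1, hc]
  have hac : a ^ c = Real.exp (Real.log a * c) := Real.rpow_def_of_pos ha c
  have hnN : n ^ N = Real.exp ((N:ℝ) * Real.log n) := by
    rw [← Real.exp_log hnpos, ← Real.exp_nat_mul, Real.log_exp]
  rw [hac, hnN, ← Real.exp_add]
  calc Real.exp (Real.log a * c + (N:ℝ) * Real.log n) ≤ Real.exp 0 :=
        Real.exp_le_exp.mpr h2
    _ = 1 := Real.exp_zero

set_option maxHeartbeats 2000000 in
/-- Refined asymptotics: under decay and integrability conditions on `A`
along a path `γ` to infinity, a solution of `v'' + A v = 0` with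
`v(z) = O(|z|)` and the stated tail integral representation satisfies
`v(z) = α z + β + O(|z|^{-N})` and `v'(z) = α + O(|z|^{-N})` for every `N`. -/
theorem stmt_14 (Ω : Set ℂ) (hΩ : IsOpen Ω) (A v : ℂ → ℂ)
    (hA : AnalyticOnNhd ℂ A Ω) (hv : AnalyticOnNhd ℂ v Ω)
    (hode : ∀ z ∈ Ω, iteratedDeriv 2 v z + A z * v z = 0)
    (γ : ℝ → ℂ) (hγd : Differentiable ℝ γ)
    (hγΩ : ∀ t, 0 ≤ t → γ t ∈ Ω)
    (hγinf : Tendsto (fun t => ‖γ t‖) atTop atTop)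
    (hAsmall : ∀ t, 0 ≤ t →
      4 ≤ ‖γ t‖ ^ 2 ∧ ‖γ t‖ ^ 2 ≤ ‖A (γ t)‖ ^ (-(1 / 4) : ℝ))
    (hintble : IntegrableOn
      (fun τ => ‖A (γ τ)‖ ^ ((1 / 4 : ℝ)) * ‖deriv γ τ‖) (Set.Ioi 0))
    (hint : (∫ τ in Set.Ioi (0:ℝ),
      ‖A (γ τ)‖ ^ ((1 / 4 : ℝ)) * ‖deriv γ τ‖) < 1 / 4)
    (C δ₀ : ℝ) (hC : 0 < C) (hδ₀ : δ₀ ∈ Set.Ioo (0:ℝ) 1)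
    (htail : ∀ s t : ℝ, 0 ≤ t → t ≤ s → ‖A (γ s)‖ ≤ C * ‖A (γ t)‖ ^ δ₀)
    (hlog : Tendsto (fun t => Real.log (1 / ‖A (γ t)‖) / Real.log ‖γ t‖)
      atTop atTop)
    (K₀ : ℝ) (hK₀ : ∀ t, 0 ≤ t → ‖v (γ t)‖ ≤ K₀ * ‖γ t‖)
    (α β : ℂ)
    (hrep : ∀ t, 0 ≤ t → v (γ t) = α * γ t + β +
      ∫ τ in Set.Ioi t, (γ t - γ τ) * A (γ τ) * v (γ τ) * deriv γ τ) :
    ∀ N : ℕ, ∃ K : ℝ, ∀ t, 0 ≤ t →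
      ‖v (γ t) - α * γ t - β‖ ≤ K / ‖γ t‖ ^ N ∧
      ‖deriv v (γ t) - α‖ ≤ K / ‖γ t‖ ^ N := by
  obtain ⟨hδ₀0, hδ₀1⟩ := hδ₀
  set w : ℝ → ℝ := fun τ => ‖A (γ τ)‖ ^ ((1/4 : ℝ)) * ‖deriv γ τ‖ with hw_def
  set g : ℝ → ℂ := fun τ => A (γ τ) * v (γ τ) * deriv γ τ with hg_def
  set J : ℝ → ℂ := fun t => ∫ τ in Set.Ioi t, g τ with hJ_def
  set L : ℝ → ℂ := fun t => ∫ τ in Set.Ioi t, γ τ * g τ with hL_def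
  -- basic facts
  have hn2 : ∀ t, 0 ≤ t → (2:ℝ) ≤ ‖γ t‖ := by
    intro t ht
    nlinarith [(hAsmall t ht).1, norm_nonneg (γ t)]
  have ha_pos : ∀ t, 0 ≤ t → 0 < ‖A (γ t)‖ := by
    intro t ht
    rcases (norm_nonneg (A (γ t))).lt_or_eq with h | h
    · exact h
    · exfalso
      have h1 := (hAsmall t ht).1; have h2 := (hAsmall t ht).2
      rw [← h, Real.zero_rpow (by norm_num : (-(1/4):ℝ) ≠ 0)] at h2
      nlinarith
  have ha4 : ∀ t, 0 ≤ t → 4 ≤ ‖A (γ t)‖ ^ (-(1/4):ℝ) :=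
    fun t ht => le_trans (hAsmall t ht).1 (hAsmall t ht).2
  have haq : ∀ t, 0 ≤ t → ‖A (γ t)‖ ^ ((1/4):ℝ) ≤ 1/4 :=
    fun t ht => (aux1 (ha_pos t ht) (ha4 t ht)).1
  have ha1 : ∀ t, 0 ≤ t → ‖A (γ t)‖ ≤ 1 :=
    fun t ht => (aux1 (ha_pos t ht) (ha4 t ht)).2
  have hna : ∀ t, 0 ≤ t → ‖γ t‖ ≤ ‖A (γ t)‖ ^ (-(1/8):ℝ) := by
    intro t ht
    exact aux2 (ha_pos t ht) (norm_nonneg _) (hAsmall t ht).2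
  have hK₀0 : 0 ≤ K₀ := by
    have h2 := hn2 0 le_rfl
    have := hK₀ 0 le_rfl
    nlinarith [norm_nonneg (v (γ 0))]

  -- continuity
  have hγc : Continuous γ := hγd.continuous
  have hAc : ContinuousOn (fun τ => A (γ τ)) (Ici 0) := fun t ht =>
    ((hA _ (hγΩ t ht)).continuousAt.comp hγc.continuousAt).continuousWithinAt
  have hvc : ContinuousOn (fun τ => v (γ τ)) (Ici 0) := fun t ht =>
    ((hv _ (hγΩ t ht)).continuousAt.comp hγc.continuousAt).continuousWithinAt
  have hdvc : ContinuousOn (fun τ => deriv v (γ τ)) (Ici 0) := fun t ht =>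
    ((hv.deriv _ (hγΩ t ht)).continuousAt.comp hγc.continuousAt).continuousWithinAt
  have hsub : ∀ {t : ℝ}, 0 ≤ t → Ioi t ⊆ Ici (0:ℝ) := fun {t} ht =>
    Ioi_subset_Ici_self.trans (Ici_subset_Ici.mpr ht)
  have hmg : ∀ t, 0 ≤ t → AEStronglyMeasurable g (volume.restrict (Ioi t)) := by
    intro t ht
    exact ((((hAc.mono (hsub ht)).mul (hvc.mono (hsub ht))).aestronglyMeasurable
      measurableSet_Ioi).mul ((measurable_deriv γ).aestronglyMeasurable.restrict))
  have hmg2 : ∀ t, 0 ≤ t → AEStronglyMeasurable (fun τ => γ τ * g τ)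
      (volume.restrict (Ioi t)) := by
    intro t ht
    exact (hγc.aestronglyMeasurable.restrict.mul (hmg t ht))
  have hw_nonneg : ∀ τ, 0 ≤ w τ := fun τ =>
    mul_nonneg (Real.rpow_nonneg (norm_nonneg _) _) (norm_nonneg _)
  have hw_t : ∀ t, 0 ≤ t → IntegrableOn w (Ioi t) := fun t ht =>
    hintble.mono_set (Ioi_subset_Ioi ht)
  have hwle : ∀ t, 0 ≤ t → (∫ τ in Ioi t, w τ) ≤ 1/4 := by
    intro t ht
    refine le_trans (setIntegral_mono_set hintble (ae_of_all _ hw_nonneg)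
      ((Ioi_subset_Ioi ht).eventuallyLE) ) (le_of_lt hint)
  -- pointwise products
  have key1 : ∀ τ, 0 ≤ τ →
      ‖A (γ τ)‖ * ‖γ τ‖ ≤ ‖A (γ τ)‖ ^ ((1/4):ℝ) * ‖A (γ τ)‖ ^ ((5/8):ℝ) := by
    intro τ hτ
    have hp := ha_pos τ hτ
    have e1 : ‖A (γ τ)‖ * ‖A (γ τ)‖ ^ (-(1/8):ℝ) = ‖A (γ τ)‖ ^ ((7/8):ℝ) := by
      nth_rewrite 1 [← Real.rpow_one ‖A (γ τ)‖]
      rw [← Real.rpow_add hp]; norm_num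
    have e2 : ‖A (γ τ)‖ ^ ((1/4):ℝ) * ‖A (γ τ)‖ ^ ((5/8):ℝ)
        = ‖A (γ τ)‖ ^ ((7/8):ℝ) := by
      rw [← Real.rpow_add hp]; norm_num
    rw [e2, ← e1]
    exact mul_le_mul_of_nonneg_left (hna τ hτ) hp.le
  have key2 : ∀ τ, 0 ≤ τ →
      ‖A (γ τ)‖ * ‖γ τ‖^2 ≤ ‖A (γ τ)‖ ^ ((1/4):ℝ) * ‖A (γ τ)‖ ^ ((1/2):ℝ) := by
    intro τ hτ
    have hp := ha_pos τ hτ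
    have e1 : ‖A (γ τ)‖ * ‖A (γ τ)‖ ^ (-(1/4):ℝ) = ‖A (γ τ)‖ ^ ((3/4):ℝ) := by
      nth_rewrite 1 [← Real.rpow_one ‖A (γ τ)‖]
      rw [← Real.rpow_add hp]; norm_num
    have e2 : ‖A (γ τ)‖ ^ ((1/4):ℝ) * ‖A (γ τ)‖ ^ ((1/2):ℝ)
        = ‖A (γ τ)‖ ^ ((3/4):ℝ) := by
      rw [← Real.rpow_add hp]; norm_num
    rw [e2, ← e1]
    exact mul_le_mul_of_nonneg_left (hAsmall τ hτ).2 hp.le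
  have keytail : ∀ (e : ℝ), 0 ≤ e → ∀ t τ, 0 ≤ t → t ≤ τ →
      ‖A (γ τ)‖ ^ e ≤ C ^ e * ‖A (γ t)‖ ^ (δ₀ * e) := by
    intro e he t τ ht hτ
    have h1 : ‖A (γ τ)‖ ≤ C * ‖A (γ t)‖ ^ δ₀ := htail τ t ht hτ
    calc ‖A (γ τ)‖ ^ e ≤ (C * ‖A (γ t)‖ ^ δ₀) ^ e :=
          Real.rpow_le_rpow (norm_nonneg _) h1 he
      _ = C ^ e * ‖A (γ t)‖ ^ (δ₀ * e) := by
          rw [Real.mul_rpow hC.le (Real.rpow_nonneg (norm_nonneg _) _),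
            Real.rpow_mul (norm_nonneg _)]
  -- global bounds
  have hgw : ∀ τ, 0 ≤ τ → ‖g τ‖ ≤ K₀ * w τ := by
    intro τ hτ
    have h58 : ‖A (γ τ)‖ ^ ((5/8):ℝ) ≤ 1 :=
      Real.rpow_le_one (norm_nonneg _) (ha1 τ hτ) (by norm_num)
    have hwεd : 0 ≤ ‖deriv γ τ‖ := norm_nonneg _
    calc ‖g τ‖ = ‖A (γ τ)‖ * ‖v (γ τ)‖ * ‖deriv γ τ‖ := by
          simp only [hg_def, norm_mul]
      _ ≤ ‖A (γ τ)‖ * (K₀ * ‖γ τ‖) * ‖deriv γ τ‖ :=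
          mul_le_mul_of_nonneg_right (mul_le_mul_of_nonneg_left (hK₀ τ hτ)
            (norm_nonneg _)) hwεd
      _ = K₀ * (‖A (γ τ)‖ * ‖γ τ‖) * ‖deriv γ τ‖ := by ring
      _ ≤ K₀ * (‖A (γ τ)‖ ^ ((1/4):ℝ) * ‖A (γ τ)‖ ^ ((5/8):ℝ)) * ‖deriv γ τ‖ :=
          mul_le_mul_of_nonneg_right (mul_le_mul_of_nonneg_left (key1 τ hτ) hK₀0) hwεd
      _ ≤ K₀ * (‖A (γ τ)‖ ^ ((1/4):ℝ) * 1) * ‖deriv γ τ‖ := by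
          have hq := Real.rpow_nonneg (norm_nonneg (A (γ τ))) ((1/4):ℝ)
          exact mul_le_mul_of_nonneg_right (mul_le_mul_of_nonneg_left
            (mul_le_mul_of_nonneg_left h58 hq) hK₀0) hwεd
      _ = K₀ * w τ := by simp only [hw_def]; ring
  have hg2w : ∀ τ, 0 ≤ τ → ‖γ τ * g τ‖ ≤ K₀ * w τ := by
    intro τ hτ
    have h12 : ‖A (γ τ)‖ ^ ((1/2):ℝ) ≤ 1 :=
      Real.rpow_le_one (norm_nonneg _) (ha1 τ hτ) (by norm_num)
    have hwεd : 0 ≤ ‖deriv γ τ‖ := norm_nonneg _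
    calc ‖γ τ * g τ‖ = ‖A (γ τ)‖ * (‖γ τ‖ * ‖v (γ τ)‖) * ‖deriv γ τ‖ := by
          simp only [hg_def, norm_mul]; ring
      _ ≤ ‖A (γ τ)‖ * (‖γ τ‖ * (K₀ * ‖γ τ‖)) * ‖deriv γ τ‖ := by
          exact mul_le_mul_of_nonneg_right (mul_le_mul_of_nonneg_left
            (mul_le_mul_of_nonneg_left (hK₀ τ hτ) (norm_nonneg (γ τ)))
            (ha_pos τ hτ).le) hwεd
      _ = K₀ * (‖A (γ τ)‖ * ‖γ τ‖^2) * ‖deriv γ τ‖ := by ring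
      _ ≤ K₀ * (‖A (γ τ)‖ ^ ((1/4):ℝ) * ‖A (γ τ)‖ ^ ((1/2):ℝ)) * ‖deriv γ τ‖ :=
          mul_le_mul_of_nonneg_right (mul_le_mul_of_nonneg_left (key2 τ hτ) hK₀0) hwεd
      _ ≤ K₀ * (‖A (γ τ)‖ ^ ((1/4):ℝ) * 1) * ‖deriv γ τ‖ := by
          have hq := Real.rpow_nonneg (norm_nonneg (A (γ τ))) ((1/4):ℝ)
          exact mul_le_mul_of_nonneg_right (mul_le_mul_of_nonneg_left
            (mul_le_mul_of_nonneg_left h12 hq) hK₀0) hwεd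
      _ = K₀ * w τ := by simp only [hw_def]; ring

  have hgw_tail : ∀ t τ, 0 ≤ t → t ≤ τ →
      ‖g τ‖ ≤ K₀ * (C ^ ((5/8):ℝ) * ‖A (γ t)‖ ^ (δ₀ * (5/8))) * w τ := by
    intro t τ ht hτt
    have hτ : (0:ℝ) ≤ τ := le_trans ht hτt
    have hwεd : 0 ≤ ‖deriv γ τ‖ := norm_nonneg _
    have hq := Real.rpow_nonneg (norm_nonneg (A (γ τ))) ((1/4):ℝ)
    calc ‖g τ‖ = ‖A (γ τ)‖ * ‖v (γ τ)‖ * ‖deriv γ τ‖ := by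
          simp only [hg_def, norm_mul]
      _ ≤ ‖A (γ τ)‖ * (K₀ * ‖γ τ‖) * ‖deriv γ τ‖ :=
          mul_le_mul_of_nonneg_right (mul_le_mul_of_nonneg_left (hK₀ τ hτ)
            (norm_nonneg _)) hwεd
      _ = K₀ * (‖A (γ τ)‖ * ‖γ τ‖) * ‖deriv γ τ‖ := by ring
      _ ≤ K₀ * (‖A (γ τ)‖ ^ ((1/4):ℝ) * ‖A (γ τ)‖ ^ ((5/8):ℝ)) * ‖deriv γ τ‖ :=
          mul_le_mul_of_nonneg_right (mul_le_mul_of_nonneg_left (key1 τ hτ) hK₀0) hwεd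
      _ ≤ K₀ * (‖A (γ τ)‖ ^ ((1/4):ℝ) *
            (C ^ ((5/8):ℝ) * ‖A (γ t)‖ ^ (δ₀ * (5/8)))) * ‖deriv γ τ‖ :=
          mul_le_mul_of_nonneg_right (mul_le_mul_of_nonneg_left
            (mul_le_mul_of_nonneg_left
              (keytail (5/8) (by norm_num) t τ ht hτt) hq) hK₀0) hwεd
      _ = K₀ * (C ^ ((5/8):ℝ) * ‖A (γ t)‖ ^ (δ₀ * (5/8))) * w τ := by
          simp only [hw_def]; ring
  have hg2w_tail : ∀ t τ, 0 ≤ t → t ≤ τ →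
      ‖γ τ * g τ‖ ≤ K₀ * (C ^ ((1/2):ℝ) * ‖A (γ t)‖ ^ (δ₀ * (1/2))) * w τ := by
    intro t τ ht hτt
    have hτ : (0:ℝ) ≤ τ := le_trans ht hτt
    have hwεd : 0 ≤ ‖deriv γ τ‖ := norm_nonneg _
    have hq := Real.rpow_nonneg (norm_nonneg (A (γ τ))) ((1/4):ℝ)
    calc ‖γ τ * g τ‖ = ‖A (γ τ)‖ * (‖γ τ‖ * ‖v (γ τ)‖) * ‖deriv γ τ‖ := by
          simp only [hg_def, norm_mul]; ring
      _ ≤ ‖A (γ τ)‖ * (‖γ τ‖ * (K₀ * ‖γ τ‖)) * ‖deriv γ τ‖ := by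
          exact mul_le_mul_of_nonneg_right (mul_le_mul_of_nonneg_left
            (mul_le_mul_of_nonneg_left (hK₀ τ hτ) (norm_nonneg (γ τ)))
            (ha_pos τ hτ).le) hwεd
      _ = K₀ * (‖A (γ τ)‖ * ‖γ τ‖^2) * ‖deriv γ τ‖ := by ring
      _ ≤ K₀ * (‖A (γ τ)‖ ^ ((1/4):ℝ) * ‖A (γ τ)‖ ^ ((1/2):ℝ)) * ‖deriv γ τ‖ :=
          mul_le_mul_of_nonneg_right (mul_le_mul_of_nonneg_left (key2 τ hτ) hK₀0) hwεd
      _ ≤ K₀ * (‖A (γ τ)‖ ^ ((1/4):ℝ) *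
            (C ^ ((1/2):ℝ) * ‖A (γ t)‖ ^ (δ₀ * (1/2)))) * ‖deriv γ τ‖ :=
          mul_le_mul_of_nonneg_right (mul_le_mul_of_nonneg_left
            (mul_le_mul_of_nonneg_left
              (keytail (1/2) (by norm_num) t τ ht hτt) hq) hK₀0) hwεd
      _ = K₀ * (C ^ ((1/2):ℝ) * ‖A (γ t)‖ ^ (δ₀ * (1/2))) * w τ := by
          simp only [hw_def]; ring
  -- integrability of g and γ·g
  have hKw_int : ∀ (c : ℝ) (t : ℝ), 0 ≤ t →
      Integrable (fun τ => c * w τ) (volume.restrict (Ioi t)) :=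
    fun c t ht => (hw_t t ht).const_mul c
  have hg_int : ∀ t, 0 ≤ t → IntegrableOn g (Ioi t) := by
    intro t ht
    refine Integrable.mono (hKw_int K₀ t ht) (hmg t ht) ?_
    refine (ae_restrict_iff' measurableSet_Ioi).mpr (ae_of_all _ fun τ hτ => ?_)
    rw [Real.norm_eq_abs, abs_of_nonneg (mul_nonneg hK₀0 (hw_nonneg τ))]
    exact hgw τ (le_of_lt (lt_of_le_of_lt ht hτ))
  have hg2_int : ∀ t, 0 ≤ t → IntegrableOn (fun τ => γ τ * g τ) (Ioi t) := by
    intro t ht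
    refine Integrable.mono (hKw_int K₀ t ht) (hmg2 t ht) ?_
    refine (ae_restrict_iff' measurableSet_Ioi).mpr (ae_of_all _ fun τ hτ => ?_)
    rw [Real.norm_eq_abs, abs_of_nonneg (mul_nonneg hK₀0 (hw_nonneg τ))]
    exact hg2w τ (le_of_lt (lt_of_le_of_lt ht hτ))
  -- generic tail-integral bound
  have int_bound : ∀ (f : ℝ → ℂ) (c : ℝ) (t : ℝ), 0 ≤ t → 0 ≤ c →
      AEStronglyMeasurable f (volume.restrict (Ioi t)) →
      (∀ τ, t < τ → ‖f τ‖ ≤ c * w τ) → ‖∫ τ in Ioi t, f τ‖ ≤ c * (1/4) := by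
    intro f c t ht hc hm hb
    calc ‖∫ τ in Ioi t, f τ‖ ≤ ∫ τ in Ioi t, ‖f τ‖ := norm_integral_le_integral_norm f
      _ ≤ ∫ τ in Ioi t, c * w τ := by
          refine integral_mono_of_nonneg (ae_of_all _ fun τ => norm_nonneg _)
            (hKw_int c t ht) ?_
          exact (ae_restrict_iff' measurableSet_Ioi).mpr (ae_of_all _ fun τ hτ => hb τ hτ)
      _ = c * ∫ τ in Ioi t, w τ := by rw [integral_const_mul]
      _ ≤ c * (1/4) := mul_le_mul_of_nonneg_left (hwle t ht) hc
  have hJb : ∀ t, 0 ≤ t →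
      ‖J t‖ ≤ K₀ * (C ^ ((5/8):ℝ) * ‖A (γ t)‖ ^ (δ₀ * (5/8))) * (1/4) := by
    intro t ht
    refine int_bound g _ t ht (mul_nonneg hK₀0 (mul_nonneg
      (Real.rpow_nonneg hC.le _) (Real.rpow_nonneg (norm_nonneg _) _)))
      (hmg t ht) ?_
    exact fun τ hτ => hgw_tail t τ ht (le_of_lt hτ)
  have hLb : ∀ t, 0 ≤ t →
      ‖L t‖ ≤ K₀ * (C ^ ((1/2):ℝ) * ‖A (γ t)‖ ^ (δ₀ * (1/2))) * (1/4) := by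
    intro t ht
    refine int_bound (fun τ => γ τ * g τ) _ t ht (mul_nonneg hK₀0 (mul_nonneg
      (Real.rpow_nonneg hC.le _) (Real.rpow_nonneg (norm_nonneg _) _)))
      (hmg2 t ht) ?_
    exact fun τ hτ => hg2w_tail t τ ht (le_of_lt hτ)
  -- representation split
  have hsplit : ∀ t, 0 ≤ t → v (γ t) - α * γ t - β = γ t * J t - L t := by
    intro t ht
    have e1 : (fun τ => (γ t - γ τ) * A (γ τ) * v (γ τ) * deriv γ τ)
        = fun τ => γ t * g τ - γ τ * g τ := by
      funext τ; simp only [hg_def]; ring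
    have e2 : (∫ τ in Ioi t, (γ t - γ τ) * A (γ τ) * v (γ τ) * deriv γ τ)
        = γ t * J t - L t := by
      rw [e1, integral_sub ((hg_int t ht).const_mul (γ t)) (hg2_int t ht),
        integral_const_mul]
    have hr := hrep t ht
    rw [e2] at hr
    linear_combination hr

  -- threshold from hlog
  obtain ⟨T₁, hT₁⟩ := eventually_atTop.mp (hlog.eventually_ge_atTop ((8:ℝ)/δ₀))
  set T : ℝ := max T₁ 0 with hT_def
  have hT0 : (0:ℝ) ≤ T := le_max_right _ _
  have hnlog : ∀ t, T ≤ t → ‖γ t‖ ≤ ‖A (γ t)‖ ^ (δ₀ * (-(1/8))) := by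
    intro t ht
    have ht0 : (0:ℝ) ≤ t := le_trans hT0 ht
    have hc : (0:ℝ) < δ₀ * (1/8) := by positivity
    have hx : (0:ℝ) < ‖A (γ t)‖ ^ (δ₀ * (1/8)) :=
      Real.rpow_pos_of_pos (ha_pos t ht0) _
    have hratio : ((1:ℕ):ℝ)/(δ₀ * (1/8)) ≤
        Real.log (1/‖A (γ t)‖) / Real.log ‖γ t‖ := by
      have h8 : ((1:ℕ):ℝ)/(δ₀ * (1/8)) = 8/δ₀ := by
        push_cast; field_simp
      rw [h8]
      exact hT₁ t (le_trans (le_max_left _ _) ht)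
    have h1 : ‖A (γ t)‖ ^ (δ₀ * (1/8)) * ‖γ t‖ ^ (1:ℕ) ≤ 1 :=
      aux3 1 (ha_pos t ht0) (hn2 t ht0) hc hratio
    rw [pow_one] at h1
    rw [show δ₀ * (-(1/8)) = -(δ₀ * (1/8)) by ring,
      Real.rpow_neg (ha_pos t ht0).le, inv_eq_one_div]
    rw [le_div_iff₀ hx]
    linarith [h1]
  -- E bound for t ≥ T
  have hEb : ∀ t, T ≤ t → ‖v (γ t) - α * γ t - β‖ ≤
      (K₀ * (C ^ ((5/8):ℝ) + C ^ ((1/2):ℝ)) * (1/4)) * ‖A (γ t)‖ ^ (δ₀ * (1/2)) := by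
    intro t ht
    have ht0 : (0:ℝ) ≤ t := le_trans hT0 ht
    have e : ‖A (γ t)‖ ^ (δ₀ * (-(1/8))) * ‖A (γ t)‖ ^ (δ₀ * (5/8))
        = ‖A (γ t)‖ ^ (δ₀ * (1/2)) := by
      rw [← Real.rpow_add (ha_pos t ht0)]; congr 1; ring
    rw [hsplit t ht0]
    calc ‖γ t * J t - L t‖ ≤ ‖γ t‖ * ‖J t‖ + ‖L t‖ :=
          (norm_sub_le _ _).trans (by rw [norm_mul])
      _ ≤ ‖A (γ t)‖ ^ (δ₀ * (-(1/8))) *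
            (K₀ * (C ^ ((5/8):ℝ) * ‖A (γ t)‖ ^ (δ₀ * (5/8))) * (1/4)) +
          K₀ * (C ^ ((1/2):ℝ) * ‖A (γ t)‖ ^ (δ₀ * (1/2))) * (1/4) := by
          refine add_le_add (mul_le_mul (hnlog t ht) (hJb t ht0)
            (norm_nonneg _) (Real.rpow_nonneg (norm_nonneg _) _)) (hLb t ht0)
      _ = K₀ * C ^ ((5/8):ℝ) * (1/4) *
            (‖A (γ t)‖ ^ (δ₀ * (-(1/8))) * ‖A (γ t)‖ ^ (δ₀ * (5/8))) +
          K₀ * C ^ ((1/2):ℝ) * (1/4) * ‖A (γ t)‖ ^ (δ₀ * (1/2)) := by ring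
      _ = (K₀ * (C ^ ((5/8):ℝ) + C ^ ((1/2):ℝ)) * (1/4)) *
            ‖A (γ t)‖ ^ (δ₀ * (1/2)) := by rw [e]; ring

  -- tail splitting of J
  have hJdiff : ∀ t s : ℝ, 0 ≤ t → t ≤ s → J t = (∫ τ in Ioc t s, g τ) + J s := by
    intro t s ht hts
    have hu : Ioc t s ∪ Ioi s = Ioi t := Ioc_union_Ioi_eq_Ioi hts
    have : J t = ∫ τ in Ioc t s ∪ Ioi s, g τ := by rw [hu]
    rw [this, setIntegral_union Ioc_disjoint_Ioi_same measurableSet_Ioi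
      ((hg_int t ht).mono_set Ioc_subset_Ioi_self) (hg_int s (le_trans ht hts))]
  -- derivative of deriv v ∘ γ
  have hode' : ∀ τ : ℝ, 0 ≤ τ → HasDerivAt (fun σ => deriv v (γ σ)) (-(g τ)) τ := by
    intro τ hτ
    have hz := hγΩ τ hτ
    have h1 : HasDerivAt (deriv v) (deriv (deriv v) (γ τ)) (γ τ) :=
      ((hv.deriv) _ hz).differentiableAt.hasDerivAt
    have h3 : deriv (deriv v) (γ τ) = -(A (γ τ) * v (γ τ)) := by
      have h4 := hode (γ τ) hz
      have h5 : iteratedDeriv 2 v = deriv (deriv v) := by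
        rw [iteratedDeriv_succ, iteratedDeriv_one]
      rw [h5] at h4
      linear_combination h4
    have h2 : HasDerivAt (deriv v ∘ γ)
        (deriv γ τ • deriv (deriv v) (γ τ)) τ := h1.scomp τ ((hγd τ).hasDerivAt)
    rw [h3] at h2
    have he : (-(g τ)) = deriv γ τ • (-(A (γ τ) * v (γ τ))) := by
      simp only [hg_def, smul_eq_mul]; ring
    rw [he]
    exact h2
  -- local integrability of deriv γ
  have hγ'_int : ∀ t s : ℝ, 0 ≤ t → t ≤ s → IntegrableOn (deriv γ) (Ioc t s) := by
    intro t s ht hts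
    have hs0 : (0:ℝ) ≤ s := le_trans ht hts
    set m : ℝ := (‖A (γ s)‖ / C) ^ ((1/δ₀):ℝ) with hm_def
    have hm : 0 < m := Real.rpow_pos_of_pos (div_pos (ha_pos s hs0) hC) _
    have hmq : 0 < m ^ ((1/4):ℝ) := Real.rpow_pos_of_pos hm _
    refine Integrable.mono (((hw_t t ht).mono_set
      Ioc_subset_Ioi_self).const_mul ((m ^ ((1/4):ℝ))⁻¹))
      (measurable_deriv γ).aestronglyMeasurable.restrict ?_
    refine (ae_restrict_iff' measurableSet_Ioc).mpr (ae_of_all _ fun τ hτ => ?_)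
    have hτ0 : (0:ℝ) ≤ τ := le_of_lt (lt_of_le_of_lt ht hτ.1)
    have ham : m ≤ ‖A (γ τ)‖ := by
      have h1 : ‖A (γ s)‖ ≤ C * ‖A (γ τ)‖ ^ δ₀ := htail s τ hτ0 hτ.2
      have h2 : ‖A (γ s)‖ / C ≤ ‖A (γ τ)‖ ^ δ₀ := by
        rw [div_le_iff₀ hC]; linarith
      calc m ≤ (‖A (γ τ)‖ ^ δ₀) ^ ((1/δ₀):ℝ) :=
            Real.rpow_le_rpow (div_nonneg (norm_nonneg _) hC.le) h2
              (by positivity)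
        _ = ‖A (γ τ)‖ := by
            rw [← Real.rpow_mul (norm_nonneg _), mul_one_div,
              div_self (ne_of_gt hδ₀0), Real.rpow_one]
    have hq : m ^ ((1/4):ℝ) ≤ ‖A (γ τ)‖ ^ ((1/4):ℝ) :=
      Real.rpow_le_rpow hm.le ham (by norm_num)
    have h1 : (1:ℝ) ≤ (m ^ ((1/4):ℝ))⁻¹ * ‖A (γ τ)‖ ^ ((1/4):ℝ) := by
      rw [inv_mul_eq_div, le_div_iff₀ hmq]; linarith
    rw [Real.norm_eq_abs, abs_of_nonneg (mul_nonneg (inv_nonneg.mpr hmq.le)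
      (hw_nonneg τ))]
    calc ‖deriv γ τ‖ = 1 * ‖deriv γ τ‖ := (one_mul _).symm
      _ ≤ ((m ^ ((1/4):ℝ))⁻¹ * ‖A (γ τ)‖ ^ ((1/4):ℝ)) * ‖deriv γ τ‖ :=
          mul_le_mul_of_nonneg_right h1 (norm_nonneg _)
      _ = (m ^ ((1/4):ℝ))⁻¹ * w τ := by simp only [hw_def]; ring
  -- FTC for γ
  have hγFTC : ∀ t s : ℝ, 0 ≤ t → t ≤ s → γ s - γ t = ∫ τ in Ioc t s, deriv γ τ := by
    intro t s ht hts
    have := intervalIntegral.integral_eq_sub_of_hasDerivAt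
      (f := γ) (f' := deriv γ) (fun x _ => (hγd x).hasDerivAt)
      ((intervalIntegrable_iff_integrableOn_Ioc_of_le hts).mpr (hγ'_int t s ht hts))
    rw [intervalIntegral.integral_of_le hts] at this
    exact this.symm
  -- deriv v ∘ γ - J is constant
  have hG : ∀ t s : ℝ, 0 ≤ t → t ≤ s →
      deriv v (γ s) - J s = deriv v (γ t) - J t := by
    intro t s ht hts
    have hii : IntervalIntegrable (fun τ => -(g τ)) volume t s :=
      (intervalIntegrable_iff_integrableOn_Ioc_of_le hts).mpr
        ((hg_int t ht).mono_set Ioc_subset_Ioi_self).neg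
    have hftc := intervalIntegral.integral_eq_sub_of_hasDerivAt
      (f := fun σ => deriv v (γ σ)) (f' := fun τ => -(g τ))
      (fun x hx => by
        rw [uIcc_of_le hts] at hx
        exact hode' x (le_trans ht hx.1)) hii
    rw [intervalIntegral.integral_of_le hts, integral_neg] at hftc
    have hJd := hJdiff t s ht hts
    linear_combination hJd - hftc
  -- uniform bound on J
  have hJb1 : ∀ τ : ℝ, 0 ≤ τ → ‖J τ‖ ≤ K₀ * C ^ ((5/8):ℝ) * (1/4) := by
    intro τ hτ
    have h1 := hJb τ hτ
    have h2 : ‖A (γ τ)‖ ^ (δ₀ * (5/8)) ≤ 1 :=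
      Real.rpow_le_one (norm_nonneg _) (ha1 τ hτ) (by positivity)
    have h3 : (0:ℝ) ≤ K₀ * C ^ ((5/8):ℝ) :=
      mul_nonneg hK₀0 (Real.rpow_nonneg hC.le _)
    nlinarith [h1, h2, h3, Real.rpow_nonneg (norm_nonneg (A (γ τ))) (δ₀ * (5/8))]
  -- FTC for v ∘ γ
  have hvFTC : ∀ t s : ℝ, 0 ≤ t → t ≤ s →
      v (γ s) - v (γ t) = ∫ τ in Ioc t s, deriv γ τ * deriv v (γ τ) := by
    intro t s ht hts
    set M : ℝ := ‖deriv v (γ t) - J t‖ + K₀ * C ^ ((5/8):ℝ) * (1/4) with hM_def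
    have hdvb : ∀ τ, t ≤ τ → ‖deriv v (γ τ)‖ ≤ M := by
      intro τ hτt
      have hτ0 : (0:ℝ) ≤ τ := le_trans ht hτt
      have h1 : deriv v (γ τ) = (deriv v (γ t) - J t) + J τ := by
        have := hG t τ ht hτt
        linear_combination this
      rw [h1]
      exact (norm_add_le _ _).trans (add_le_add le_rfl (hJb1 τ hτ0))
    have hii : IntervalIntegrable (fun τ => deriv γ τ * deriv v (γ τ)) volume t s := by
      refine (intervalIntegrable_iff_integrableOn_Ioc_of_le hts).mpr ?_
      refine Integrable.mono (((hγ'_int t s ht hts).norm.const_mul M))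
        (((measurable_deriv γ).aestronglyMeasurable.restrict).mul
          ((hdvc.mono (fun x hx => le_trans ht (le_of_lt hx.1))).aestronglyMeasurable
            measurableSet_Ioc)) ?_
      refine (ae_restrict_iff' measurableSet_Ioc).mpr (ae_of_all _ fun τ hτ => ?_)
      have hM0 : 0 ≤ M := le_trans (norm_nonneg _) (hdvb t le_rfl)
      rw [Real.norm_eq_abs, abs_of_nonneg (mul_nonneg hM0 (norm_nonneg _)),
        norm_mul]
      calc ‖deriv γ τ‖ * ‖deriv v (γ τ)‖ ≤ ‖deriv γ τ‖ * M :=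
            mul_le_mul_of_nonneg_left (hdvb τ (le_of_lt hτ.1)) (norm_nonneg _)
        _ = M * ‖deriv γ τ‖ := by ring
    have hftc := intervalIntegral.integral_eq_sub_of_hasDerivAt
      (f := fun σ => v (γ σ)) (f' := fun τ => deriv γ τ * deriv v (γ τ))
      (fun x hx => by
        rw [uIcc_of_le hts] at hx
        have hx0 : (0:ℝ) ≤ x := le_trans ht hx.1
        have h1 : HasDerivAt v (deriv v (γ x)) (γ x) :=
          (hv _ (hγΩ x hx0)).differentiableAt.hasDerivAt
        have h2 : HasDerivAt (v ∘ γ) (deriv γ x • deriv v (γ x)) x :=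
          h1.scomp x ((hγd x).hasDerivAt)
        rw [smul_eq_mul] at h2
        exact h2) hii
    rw [intervalIntegral.integral_of_le hts] at hftc
    exact hftc.symm

  -- continuity of J on [0, ∞)
  have hJcont : ContinuousOn J (Ici 0) := by
    set gb : ℝ → ℂ := (Ioi (0:ℝ)).indicator g with hgb_def
    have hgb_int : Integrable gb volume :=
      (integrable_indicator_iff measurableSet_Ioi).mpr (hg_int 0 le_rfl)
    have hP : Continuous (fun x => ∫ τ in (0:ℝ)..x, gb τ) :=
      hgb_int.continuous_primitive 0
    refine ContinuousOn.congr
      (f := fun x => J 0 - ∫ τ in (0:ℝ)..x, gb τ)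
      ((continuous_const.sub hP).continuousOn) ?_
    intro σ hσ
    show J σ = J 0 - ∫ τ in (0:ℝ)..σ, gb τ
    have hσ0 : (0:ℝ) ≤ σ := hσ
    have h1 : ∫ τ in (0:ℝ)..σ, gb τ = ∫ τ in Ioc 0 σ, g τ := by
      rw [intervalIntegral.integral_of_le hσ0, hgb_def, setIntegral_indicator
        measurableSet_Ioi, inter_eq_left.mpr Ioc_subset_Ioi_self]
    have h2 := hJdiff 0 σ le_rfl hσ0
    rw [h1]
    linear_combination -h2
  -- integrability of γ' · J on Ioc
  have hγJ_int : ∀ t s : ℝ, 0 ≤ t → t ≤ s →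
      IntegrableOn (fun σ => deriv γ σ * J σ) (Ioc t s) := by
    intro t s ht hts
    have hIoc_sub : Ioc t s ⊆ Ici (0:ℝ) := fun x hx => le_trans ht (le_of_lt hx.1)
    refine Integrable.mono ((hγ'_int t s ht hts).norm.const_mul
      (K₀ * C ^ ((5/8):ℝ) * (1/4)))
      ((measurable_deriv γ).aestronglyMeasurable.restrict.mul
        ((hJcont.mono hIoc_sub).aestronglyMeasurable measurableSet_Ioc)) ?_
    refine (ae_restrict_iff' measurableSet_Ioc).mpr (ae_of_all _ fun σ hσ => ?_)
    have hσ0 : (0:ℝ) ≤ σ := le_trans ht (le_of_lt hσ.1)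
    have hJ1 := hJb1 σ hσ0
    have hcJ : (0:ℝ) ≤ K₀ * C ^ ((5/8):ℝ) * (1/4) :=
      le_trans (norm_nonneg _) hJ1
    rw [Real.norm_eq_abs, abs_of_nonneg (mul_nonneg hcJ (norm_nonneg _)), norm_mul]
    calc ‖deriv γ σ‖ * ‖J σ‖ ≤ ‖deriv γ σ‖ * (K₀ * C ^ ((5/8):ℝ) * (1/4)) :=
          mul_le_mul_of_nonneg_left hJ1 (norm_nonneg _)
      _ = K₀ * C ^ ((5/8):ℝ) * (1/4) * ‖deriv γ σ‖ := by ring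
  -- the Fubini identity
  have hFUB : ∀ t s : ℝ, 0 ≤ t → t ≤ s →
      ∫ σ in Ioc t s, deriv γ σ * J σ =
        (γ s - γ t) * J s + ∫ τ in Ioc t s, (γ τ - γ t) * g τ := by
    intro t s ht hts
    have hs0 : (0:ℝ) ≤ s := le_trans ht hts
    have hIoc_sub : Ioc t s ⊆ Ici (0:ℝ) := fun x hx => le_trans ht (le_of_lt hx.1)
    have hgIoc : IntegrableOn g (Ioc t s) :=
      (hg_int t ht).mono_set Ioc_subset_Ioi_self
    -- split off the constant J s
    have hsplit2 : (fun σ => deriv γ σ * J σ)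
        = fun σ => deriv γ σ * (J σ - J s) + deriv γ σ * J s := by
      funext σ; ring
    have hI1 : IntegrableOn (fun σ => deriv γ σ * (J σ - J s)) (Ioc t s) := by
      have := (hγJ_int t s ht hts).sub ((hγ'_int t s ht hts).mul_const (J s))
      refine this.congr ?_
      exact ae_of_all _ fun σ => by simp only [Pi.sub_apply]; ring
    have hI2 : IntegrableOn (fun σ => deriv γ σ * J s) (Ioc t s) :=
      (hγ'_int t s ht hts).mul_const (J s)
    rw [hsplit2, integral_add hI1 hI2, integral_mul_const, ← hγFTC t s ht hts]
    -- now handle the first integral by Fubini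
    have hcong1 : ∫ σ in Ioc t s, deriv γ σ * (J σ - J s)
        = ∫ σ in Ioc t s, deriv γ σ * ∫ τ in Ioc σ s, g τ := by
      refine setIntegral_congr_fun measurableSet_Ioc fun σ hσ => ?_
      have hσ0 : (0:ℝ) ≤ σ := le_trans ht (le_of_lt hσ.1)
      have := hJdiff σ s hσ0 hσ.2
      rw [show J σ - J s = ∫ τ in Ioc σ s, g τ by linear_combination this]
    have hcong2 : ∫ σ in Ioc t s, deriv γ σ * ∫ τ in Ioc σ s, g τ
        = ∫ σ in Ioc t s, ∫ τ in Ioc t s,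
            ({q : ℝ × ℝ | q.1 < q.2}.indicator (fun q => deriv γ q.1 * g q.2)) (σ, τ) := by
      refine setIntegral_congr_fun measurableSet_Ioc fun σ hσ => ?_
      have h1 : ∫ τ in Ioc σ s, g τ = ∫ τ in Ioc t s, (Ioi σ).indicator g τ := by
        rw [setIntegral_indicator measurableSet_Ioi]
        congr 1
        rw [Ioc_inter_Ioi, max_eq_right (le_of_lt hσ.1)]
      rw [h1, ← integral_const_mul]
      refine setIntegral_congr_fun measurableSet_Ioc fun τ hτ => ?_
      by_cases h : σ < τ
      · simp [Set.indicator_apply, h, mem_Ioi]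
      · simp [Set.indicator_apply, h, mem_Ioi]
    have hprod : Integrable (fun q : ℝ × ℝ => deriv γ q.1 * g q.2)
        ((volume.restrict (Ioc t s)).prod (volume.restrict (Ioc t s))) :=
      Integrable.mul_prod (hγ'_int t s ht hts) hgIoc
    have hind : Integrable
        (({q : ℝ × ℝ | q.1 < q.2}.indicator (fun q => deriv γ q.1 * g q.2)))
        ((volume.restrict (Ioc t s)).prod (volume.restrict (Ioc t s))) :=
      hprod.indicator (measurableSet_lt measurable_fst measurable_snd)
    have hswap := MeasureTheory.integral_integral_swap
      (f := fun σ τ => ({q : ℝ × ℝ | q.1 < q.2}.indicator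
        (fun q => deriv γ q.1 * g q.2)) (σ, τ))
      (μ := volume.restrict (Ioc t s)) (ν := volume.restrict (Ioc t s)) hind
    have hcong3 : ∫ τ in Ioc t s, ∫ σ in Ioc t s,
        ({q : ℝ × ℝ | q.1 < q.2}.indicator (fun q => deriv γ q.1 * g q.2)) (σ, τ)
        = ∫ τ in Ioc t s, (γ τ - γ t) * g τ := by
      refine setIntegral_congr_fun measurableSet_Ioc fun τ hτ => ?_
      have h1 : (fun σ => ({q : ℝ × ℝ | q.1 < q.2}.indicator
          (fun q => deriv γ q.1 * g q.2)) (σ, τ))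
          = fun σ => ((Iio τ).indicator (deriv γ) σ) * g τ := by
        funext σ
        by_cases h : σ < τ
        · simp [Set.indicator_apply, h, mem_Iio]
        · simp [Set.indicator_apply, h, mem_Iio]
      rw [h1, integral_mul_const, setIntegral_indicator measurableSet_Iio]
      have h2 : Ioc t s ∩ Iio τ = Ioo t τ := by
        ext σ
        constructor
        · rintro ⟨⟨h3, _⟩, h5⟩; exact ⟨h3, h5⟩
        · rintro ⟨h3, h4⟩; exact ⟨⟨h3, le_trans (le_of_lt h4) hτ.2⟩, h4⟩
      rw [h2]
      have h3 : ∫ σ in Ioo t τ, deriv γ σ = ∫ σ in Ioc t τ, deriv γ σ :=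
        (integral_Ioc_eq_integral_Ioo).symm
      rw [h3, ← hγFTC t τ ht (le_of_lt hτ.1)]
    rw [hcong1, hcong2, hswap, hcong3]
    ring

  -- main identity
  set Gc : ℂ := deriv v (γ 0) - J 0 with hGc_def
  have hmain : ∀ s, T ≤ s → (Gc - α) * (γ s - γ T) =
      (v (γ s) - α * γ s - β) - (v (γ T) - α * γ T - β) - (γ s - γ T) * J s
      - ∫ τ in Ioc T s, (γ τ - γ T) * g τ := by
    intro s hTs
    have hs0 : (0:ℝ) ≤ s := le_trans hT0 hTs
    have h1 := hvFTC T s hT0 hTs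
    have hcong : ∫ τ in Ioc T s, deriv γ τ * deriv v (γ τ)
        = ∫ τ in Ioc T s, (deriv γ τ * Gc + deriv γ τ * J τ) := by
      refine setIntegral_congr_fun measurableSet_Ioc fun τ hτ => ?_
      have hτ0 : (0:ℝ) ≤ τ := le_trans hT0 (le_of_lt hτ.1)
      have h := hG 0 τ le_rfl hτ0
      rw [hGc_def]
      linear_combination (deriv γ τ) * h
    have h2 : ∫ τ in Ioc T s, (deriv γ τ * Gc + deriv γ τ * J τ)
        = (γ s - γ T) * Gc + ((γ s - γ T) * J s
            + ∫ τ in Ioc T s, (γ τ - γ T) * g τ) := by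
      rw [integral_add ((hγ'_int T s hT0 hTs).mul_const Gc) (hγJ_int T s hT0 hTs),
        integral_mul_const, ← hγFTC T s hT0 hTs, hFUB T s hT0 hTs]
    rw [hcong, h2] at h1
    linear_combination -h1
  -- ‖γ t‖ ‖J t‖ is bounded for t ≥ T
  have hnJ : ∀ t, T ≤ t → ‖γ t‖ * ‖J t‖ ≤ K₀ * C ^ ((5/8):ℝ) * (1/4) := by
    intro t ht
    have ht0 : (0:ℝ) ≤ t := le_trans hT0 ht
    have e : ‖A (γ t)‖ ^ (δ₀ * (-(1/8))) * ‖A (γ t)‖ ^ (δ₀ * (5/8))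
        = ‖A (γ t)‖ ^ (δ₀ * (1/2)) := by
      rw [← Real.rpow_add (ha_pos t ht0)]; congr 1; ring
    have h2 : ‖A (γ t)‖ ^ (δ₀ * (1/2)) ≤ 1 :=
      Real.rpow_le_one (norm_nonneg _) (ha1 t ht0) (by positivity)
    have h3 : (0:ℝ) ≤ K₀ * C ^ ((5/8):ℝ) * (1/4) :=
      le_trans (norm_nonneg _) (hJb1 t ht0)
    calc ‖γ t‖ * ‖J t‖ ≤ ‖A (γ t)‖ ^ (δ₀ * (-(1/8))) *
          (K₀ * (C ^ ((5/8):ℝ) * ‖A (γ t)‖ ^ (δ₀ * (5/8))) * (1/4)) :=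
          mul_le_mul (hnlog t ht) (hJb t ht0) (norm_nonneg _)
            (Real.rpow_nonneg (norm_nonneg _) _)
      _ = (K₀ * C ^ ((5/8):ℝ) * (1/4)) *
            (‖A (γ t)‖ ^ (δ₀ * (-(1/8))) * ‖A (γ t)‖ ^ (δ₀ * (5/8))) := by ring
      _ ≤ (K₀ * C ^ ((5/8):ℝ) * (1/4)) * 1 := by
          rw [e]; exact mul_le_mul_of_nonneg_left h2 h3
      _ = K₀ * C ^ ((5/8):ℝ) * (1/4) := mul_one _
  -- tail integral bound on Ioc
  have htailI : ∀ s, T ≤ s →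
      ‖∫ τ in Ioc T s, (γ τ - γ T) * g τ‖ ≤ (1 + ‖γ T‖) * K₀ * (1/4) := by
    intro s hTs
    have hwIoc : IntegrableOn w (Ioc T s) :=
      (hw_t T hT0).mono_set Ioc_subset_Ioi_self
    have hmgIoc : AEStronglyMeasurable (fun τ => (γ τ - γ T) * g τ)
        (volume.restrict (Ioc T s)) := by
      have hIoc_sub : Ioc T s ⊆ Ici (0:ℝ) := fun x hx => le_trans hT0 (le_of_lt hx.1)
      exact ((hγc.sub continuous_const).aestronglyMeasurable.restrict).mul
        ((((hAc.mono hIoc_sub).mul (hvc.mono hIoc_sub)).aestronglyMeasurable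
          measurableSet_Ioc).mul ((measurable_deriv γ).aestronglyMeasurable.restrict))
    calc ‖∫ τ in Ioc T s, (γ τ - γ T) * g τ‖
        ≤ ∫ τ in Ioc T s, ‖(γ τ - γ T) * g τ‖ := norm_integral_le_integral_norm _
      _ ≤ ∫ τ in Ioc T s, (1 + ‖γ T‖) * K₀ * w τ := by
          refine integral_mono_of_nonneg (ae_of_all _ fun τ => norm_nonneg _)
            (hwIoc.const_mul _) ?_
          refine (ae_restrict_iff' measurableSet_Ioc).mpr (ae_of_all _ fun τ hτ => ?_)
          have hτ0 : (0:ℝ) ≤ τ := le_trans hT0 (le_of_lt hτ.1)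
          calc ‖(γ τ - γ T) * g τ‖ = ‖γ τ * g τ - γ T * g τ‖ := by rw [sub_mul]
            _ ≤ ‖γ τ * g τ‖ + ‖γ T * g τ‖ := norm_sub_le _ _
            _ ≤ K₀ * w τ + ‖γ T‖ * (K₀ * w τ) := by
                refine add_le_add (hg2w τ hτ0) ?_
                rw [norm_mul]
                exact mul_le_mul_of_nonneg_left (hgw τ hτ0) (norm_nonneg _)
            _ = (1 + ‖γ T‖) * K₀ * w τ := by ring
      _ = (1 + ‖γ T‖) * K₀ * ∫ τ in Ioc T s, w τ := by rw [integral_const_mul]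
      _ ≤ (1 + ‖γ T‖) * K₀ * (1/4) := by
          refine mul_le_mul_of_nonneg_left ?_
            (mul_nonneg (by positivity) hK₀0)
          refine le_trans (setIntegral_mono_set hintble (ae_of_all _ hw_nonneg)
            (HasSubset.Subset.eventuallyLE ?_)) (le_of_lt hint)
          exact fun x hx => lt_of_le_of_lt hT0 hx.1
  -- conclude Gc = α
  have hGcα : Gc = α := by
    by_contra hne
    have hc : 0 < ‖Gc - α‖ := by
      rw [norm_pos_iff, sub_ne_zero]; exact hne
    set c : ℝ := ‖Gc - α‖ with hc_def
    set B : ℝ := K₀ * (C ^ ((5/8):ℝ) + C ^ ((1/2):ℝ)) * (1/4) * 2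
      + (K₀ * C ^ ((5/8):ℝ) * (1/4) + ‖γ T‖ * (K₀ * C ^ ((5/8):ℝ) * (1/4)))
      + (1 + ‖γ T‖) * K₀ * (1/4) with hB_def
    obtain ⟨s, hs⟩ := (((hγinf.eventually_ge_atTop (‖γ T‖ + (B + 1)/c)).and
      (eventually_ge_atTop T)).exists)
    obtain ⟨hs1, hs2⟩ := hs
    have hs0 : (0:ℝ) ≤ s := le_trans hT0 hs2
    have hcE0 : (0:ℝ) ≤ K₀ * (C ^ ((5/8):ℝ) + C ^ ((1/2):ℝ)) * (1/4) :=
      mul_nonneg (mul_nonneg hK₀0 (add_nonneg (Real.rpow_nonneg hC.le _)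
        (Real.rpow_nonneg hC.le _))) (by norm_num)
    have hEgen : ∀ u, T ≤ u → ‖v (γ u) - α * γ u - β‖ ≤
        K₀ * (C ^ ((5/8):ℝ) + C ^ ((1/2):ℝ)) * (1/4) := by
      intro u hu
      have hu0 : (0:ℝ) ≤ u := le_trans hT0 hu
      have h2 : ‖A (γ u)‖ ^ (δ₀ * (1/2)) ≤ 1 :=
        Real.rpow_le_one (norm_nonneg _) (ha1 u hu0) (by positivity)
      calc ‖v (γ u) - α * γ u - β‖
          ≤ K₀ * (C ^ ((5/8):ℝ) + C ^ ((1/2):ℝ)) * (1/4) *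
            ‖A (γ u)‖ ^ (δ₀ * (1/2)) := hEb u hu
        _ ≤ K₀ * (C ^ ((5/8):ℝ) + C ^ ((1/2):ℝ)) * (1/4) * 1 :=
            mul_le_mul_of_nonneg_left h2 hcE0
        _ = K₀ * (C ^ ((5/8):ℝ) + C ^ ((1/2):ℝ)) * (1/4) := mul_one _
    have hEs := hEgen s hs2
    have hET := hEgen T le_rfl
    have hJs : ‖(γ s - γ T) * J s‖ ≤
        K₀ * C ^ ((5/8):ℝ) * (1/4) + ‖γ T‖ * (K₀ * C ^ ((5/8):ℝ) * (1/4)) := by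
      rw [norm_mul]
      calc ‖γ s - γ T‖ * ‖J s‖ ≤ (‖γ s‖ + ‖γ T‖) * ‖J s‖ :=
            mul_le_mul_of_nonneg_right (norm_sub_le _ _) (norm_nonneg _)
        _ = ‖γ s‖ * ‖J s‖ + ‖γ T‖ * ‖J s‖ := by ring
        _ ≤ K₀ * C ^ ((5/8):ℝ) * (1/4) + ‖γ T‖ * (K₀ * C ^ ((5/8):ℝ) * (1/4)) :=
            add_le_add (hnJ s hs2)
              (mul_le_mul_of_nonneg_left (hJb1 s hs0) (norm_nonneg _))
    have hB : c * ‖γ s - γ T‖ ≤ B := by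
      have h0 := hmain s hs2
      calc c * ‖γ s - γ T‖ = ‖(Gc - α) * (γ s - γ T)‖ := by rw [norm_mul]
        _ = ‖(v (γ s) - α * γ s - β) - (v (γ T) - α * γ T - β) - (γ s - γ T) * J s
              - ∫ τ in Ioc T s, (γ τ - γ T) * g τ‖ := by rw [h0]
        _ ≤ ‖(v (γ s) - α * γ s - β)‖ + ‖(v (γ T) - α * γ T - β)‖
              + ‖(γ s - γ T) * J s‖ + ‖∫ τ in Ioc T s, (γ τ - γ T) * g τ‖ := by
            refine le_trans (norm_sub_le _ _) ?_
            refine add_le_add (le_trans (norm_sub_le _ _) ?_) le_rfl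
            exact add_le_add (norm_sub_le _ _) le_rfl
        _ ≤ B := by
            rw [hB_def]
            have := htailI s hs2
            linarith [hEs, hET, hJs]
    have hlow : ‖γ T‖ + (B + 1)/c ≤ ‖γ s‖ := hs1
    have h1 : (B+1)/c ≤ ‖γ s‖ - ‖γ T‖ := by linarith
    have h2 : ‖γ s‖ - ‖γ T‖ ≤ ‖γ s - γ T‖ := by
      have := norm_sub_norm_le (γ s) (γ T)
      linarith [this]
    have h3 : (B+1)/c ≤ ‖γ s - γ T‖ := le_trans h1 h2
    have h4 : B + 1 ≤ c * ‖γ s - γ T‖ := by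
      rw [div_le_iff₀ hc] at h3
      linarith [h3]
    linarith
  -- the derivative identity
  have hJα : ∀ t, 0 ≤ t → deriv v (γ t) - α = J t := by
    intro t ht
    have h := hG 0 t le_rfl ht
    rw [← hGc_def] at h
    rw [hGcα] at h
    linear_combination h

  -- final assembly
  intro N
  obtain ⟨T₂', hT₂'⟩ := eventually_atTop.mp
    (hlog.eventually_ge_atTop ((N:ℝ)/(δ₀ * (1/2))))
  set T₂ : ℝ := max T₂' T with hT₂_def
  have hT₂0 : (0:ℝ) ≤ T₂ := le_trans hT0 (le_max_right _ _)
  have hIcc : Icc (0:ℝ) T₂ ⊆ Ici 0 := fun x hx => hx.1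
  have hc1 : ContinuousOn (fun t : ℝ => α * γ t) (Icc 0 T₂) :=
    (continuous_const.mul hγc).continuousOn
  have hc2 : ContinuousOn (fun t => v (γ t) - α * γ t - β) (Icc 0 T₂) :=
    ((hvc.mono hIcc).sub hc1).sub continuousOn_const
  have hc3 : ContinuousOn (fun t : ℝ => ‖γ t‖ ^ N) (Icc 0 T₂) :=
    (hγc.norm.pow N).continuousOn
  have hcont1 : ContinuousOn (fun t => ‖v (γ t) - α * γ t - β‖ * ‖γ t‖ ^ N)
      (Icc 0 T₂) := hc2.norm.mul hc3
  have hc4 : ContinuousOn (fun t => deriv v (γ t) - α) (Icc 0 T₂) :=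
    (hdvc.mono hIcc).sub continuousOn_const
  have hcont2 : ContinuousOn (fun t => ‖deriv v (γ t) - α‖ * ‖γ t‖ ^ N)
      (Icc 0 T₂) := hc4.norm.mul hc3
  obtain ⟨B₁, hB₁⟩ := isCompact_Icc.exists_bound_of_continuousOn hcont1
  obtain ⟨B₂, hB₂⟩ := isCompact_Icc.exists_bound_of_continuousOn hcont2
  have hcE0 : (0:ℝ) ≤ K₀ * (C ^ ((5/8):ℝ) + C ^ ((1/2):ℝ)) * (1/4) :=
    mul_nonneg (mul_nonneg hK₀0 (add_nonneg (Real.rpow_nonneg hC.le _)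
      (Real.rpow_nonneg hC.le _))) (by norm_num)
  have hcJ0 : (0:ℝ) ≤ K₀ * C ^ ((5/8):ℝ) * (1/4) :=
    mul_nonneg (mul_nonneg hK₀0 (Real.rpow_nonneg hC.le _)) (by norm_num)
  refine ⟨|B₁| + |B₂| + K₀ * (C ^ ((5/8):ℝ) + C ^ ((1/2):ℝ)) * (1/4)
    + K₀ * C ^ ((5/8):ℝ) * (1/4), ?_⟩
  intro t ht
  have hnp : (0:ℝ) < ‖γ t‖ ^ N := pow_pos (by linarith [hn2 t ht]) N
  rcases le_or_gt t T₂ with hcase | hcase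
  · constructor
    · rw [le_div_iff₀ hnp]
      have h1 := hB₁ t ⟨ht, hcase⟩
      have h2 : ‖v (γ t) - α * γ t - β‖ * ‖γ t‖ ^ N ≤ B₁ :=
        le_trans (le_abs_self _) (by rwa [Real.norm_eq_abs] at h1)
      have h3 : B₁ ≤ |B₁| := le_abs_self _
      linarith [abs_nonneg B₂]
    · rw [le_div_iff₀ hnp]
      have h1 := hB₂ t ⟨ht, hcase⟩
      have h2 : ‖deriv v (γ t) - α‖ * ‖γ t‖ ^ N ≤ B₂ :=
        le_trans (le_abs_self _) (by rwa [Real.norm_eq_abs] at h1)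
      have h3 : B₂ ≤ |B₂| := le_abs_self _
      linarith [abs_nonneg B₁]
  · have hTt : T ≤ t := le_trans (le_max_right T₂' T) (le_of_lt hcase)
    have hratio : (N:ℝ)/(δ₀ * (1/2)) ≤
        Real.log (1/‖A (γ t)‖) / Real.log ‖γ t‖ :=
      hT₂' t (le_trans (le_max_left T₂' T) (le_of_lt hcase))
    have hax : ‖A (γ t)‖ ^ (δ₀ * (1/2)) * ‖γ t‖ ^ N ≤ 1 :=
      aux3 N (ha_pos t ht) (hn2 t ht) (by positivity) hratio
    constructor
    · rw [le_div_iff₀ hnp]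
      calc ‖v (γ t) - α * γ t - β‖ * ‖γ t‖ ^ N
          ≤ (K₀ * (C ^ ((5/8):ℝ) + C ^ ((1/2):ℝ)) * (1/4) *
              ‖A (γ t)‖ ^ (δ₀ * (1/2))) * ‖γ t‖ ^ N :=
            mul_le_mul_of_nonneg_right (hEb t hTt) hnp.le
        _ = K₀ * (C ^ ((5/8):ℝ) + C ^ ((1/2):ℝ)) * (1/4) *
              (‖A (γ t)‖ ^ (δ₀ * (1/2)) * ‖γ t‖ ^ N) := by ring
        _ ≤ K₀ * (C ^ ((5/8):ℝ) + C ^ ((1/2):ℝ)) * (1/4) * 1 :=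
            mul_le_mul_of_nonneg_left hax hcE0
        _ ≤ |B₁| + |B₂| + K₀ * (C ^ ((5/8):ℝ) + C ^ ((1/2):ℝ)) * (1/4)
              + K₀ * C ^ ((5/8):ℝ) * (1/4) := by
            have := abs_nonneg B₁
            have := abs_nonneg B₂
            linarith
    · rw [le_div_iff₀ hnp]
      have hJt : ‖deriv v (γ t) - α‖ = ‖J t‖ := by rw [hJα t ht]
      have hexp : ‖A (γ t)‖ ^ (δ₀ * (5/8)) ≤ ‖A (γ t)‖ ^ (δ₀ * (1/2)) :=
        Real.rpow_le_rpow_of_exponent_ge (ha_pos t ht) (ha1 t ht)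
          (by nlinarith [hδ₀0])
      calc ‖deriv v (γ t) - α‖ * ‖γ t‖ ^ N = ‖J t‖ * ‖γ t‖ ^ N := by rw [hJt]
        _ ≤ (K₀ * (C ^ ((5/8):ℝ) * ‖A (γ t)‖ ^ (δ₀ * (5/8))) * (1/4)) *
              ‖γ t‖ ^ N := mul_le_mul_of_nonneg_right (hJb t ht) hnp.le
        _ = K₀ * C ^ ((5/8):ℝ) * (1/4) *
              (‖A (γ t)‖ ^ (δ₀ * (5/8)) * ‖γ t‖ ^ N) := by ring
        _ ≤ K₀ * C ^ ((5/8):ℝ) * (1/4) *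
              (‖A (γ t)‖ ^ (δ₀ * (1/2)) * ‖γ t‖ ^ N) := by
            refine mul_le_mul_of_nonneg_left
              (mul_le_mul_of_nonneg_right hexp hnp.le) hcJ0
        _ ≤ K₀ * C ^ ((5/8):ℝ) * (1/4) * 1 :=
            mul_le_mul_of_nonneg_left hax hcJ0
        _ ≤ |B₁| + |B₂| + K₀ * (C ^ ((5/8):ℝ) + C ^ ((1/2):ℝ)) * (1/4)
              + K₀ * C ^ ((5/8):ℝ) * (1/4) := by
            have := abs_nonneg B₁
            have := abs_nonneg B₂
            linarith
end

section
/- Let g : ℂ → ℂ be holomorphic and nonvanishing on a domain D, and define u : ℂ → ℝ by u(z) = log|δ/g(z)| for z ∈ D and u(z) = 0 otherwise, where D is a component of {z : |g(z)| < δ} (so |g| = δ on ∂D). Then u is subharmonic on ℂ. -/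
open MeasureTheory

/-- A function is subharmonic on all of `ℂ` (continuous version): it is
continuous and satisfies the sub-mean value inequality on every circle. -/
def SubharmonicOnUniv (u : ℂ → ℝ) : Prop :=
  Continuous u ∧ ∀ (z : ℂ) (ρ : ℝ), 0 < ρ →
    u z ≤ (2 * Real.pi)⁻¹ *
      ∫ θ in (0:ℝ)..(2 * Real.pi), u (z + ρ * Complex.exp (θ * Complex.I))

noncomputable section

namespace Stmt18Aux

open Complex Set


variable {δ : ℝ} {g : ℂ → ℂ} {D : Set ℂ} {u : ℂ → ℝ}

lemma u_nonneg (hδ : 0 < δ) (hgne : ∀ z ∈ D, g z ≠ 0)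
    (hsmall : ∀ z ∈ D, ‖g z‖ < δ)
    (hu1 : ∀ z ∈ D, u z = Real.log (δ / ‖g z‖))
    (hu2 : ∀ z ∉ D, u z = 0) : ∀ x, 0 ≤ u x := by
  intro x
  by_cases hx : x ∈ D
  · rw [hu1 x hx]
    have hg : 0 < ‖g x‖ := norm_pos_iff.mpr (hgne x hx)
    exact Real.log_nonneg ((one_le_div hg).mpr (hsmall x hx).le)
  · rw [hu2 x hx]

lemma u_cont (hδ : 0 < δ) (hDo : IsOpen D)
    (hgd : DifferentiableOn ℂ g D)
    (hgc : ContinuousOn g (closure D))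
    (hgne : ∀ z ∈ D, g z ≠ 0)
    (hsmall : ∀ z ∈ D, ‖g z‖ < δ)
    (hfront : ∀ z ∈ frontier D, ‖g z‖ = δ)
    (hu1 : ∀ z ∈ D, u z = Real.log (δ / ‖g z‖))
    (hu2 : ∀ z ∉ D, u z = 0) : Continuous u := by
  have hnn := u_nonneg hδ hgne hsmall hu1 hu2
  rw [continuous_iff_continuousAt]
  intro w
  by_cases hw : w ∈ D
  · have hev : ∀ᶠ x in nhds w, u x = Real.log (δ / ‖g x‖) :=
      Filter.eventually_of_mem (hDo.mem_nhds hw) hu1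
    have hgw : 0 < ‖g w‖ := norm_pos_iff.mpr (hgne w hw)
    have hca : ContinuousAt (fun x => Real.log (δ / ‖g x‖)) w := by
      have hgc' : ContinuousAt g w :=
        (hgd.differentiableAt (hDo.mem_nhds hw)).continuousAt
      have h1 : ContinuousAt (fun x => δ / ‖g x‖) w :=
        continuousAt_const.div (hgc'.norm) hgw.ne'
      exact (Real.continuousAt_log (by positivity)).comp h1
    exact hca.congr (hev.mono fun x hx => hx.symm)
  by_cases hw2 : w ∈ closure D
  · -- frontier point
    have hwf : w ∈ frontier D := by rw [hDo.frontier_eq]; exact ⟨hw2, hw⟩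
    have huw : u w = 0 := hu2 w hw
    rw [ContinuousAt, huw, Metric.tendsto_nhds]
    intro ε hε
    set r : ℝ := δ * Real.exp (-ε) with hr
    have hr0 : 0 < r := by positivity
    have hrδ : r < δ := by
      have : Real.exp (-ε) < 1 := Real.exp_lt_one_iff.mpr (by linarith)
      nlinarith
    have htend : Filter.Tendsto (fun x => ‖g x‖) (nhdsWithin w (closure D)) (nhds δ) := by
      have h := (hgc w hw2).norm
      simp only [ContinuousWithinAt] at h
      have he : ‖g w‖ = δ := hfront w hwf
      rwa [he] at h
    have hev2 : ∀ᶠ x in nhds w, x ∈ closure D → r < ‖g x‖ := by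
      have : ∀ᶠ x in nhdsWithin w (closure D), r < ‖g x‖ :=
        htend.eventually (eventually_gt_nhds hrδ)
      rwa [eventually_nhdsWithin_iff] at this
    refine hev2.mono fun x hx => ?_
    by_cases hxD : x ∈ D
    · have hgx : 0 < ‖g x‖ := norm_pos_iff.mpr (hgne x hxD)
      have hrx : r < ‖g x‖ := hx (subset_closure hxD)
      have hux : u x < ε := by
        rw [hu1 x hxD, Real.log_lt_iff_lt_exp (by positivity)]
        rw [div_lt_iff₀ hgx]
        calc δ = r * Real.exp ε := by
                rw [hr, mul_assoc, ← Real.exp_add, neg_add_cancel, Real.exp_zero, mul_one]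
          _ < Real.exp ε * ‖g x‖ := by
                rw [mul_comm r _]
                exact mul_lt_mul_of_pos_left hrx (Real.exp_pos ε)
      rw [Real.dist_eq, sub_zero, _root_.abs_of_nonneg (hnn x)]
      simpa using hux
    · rw [hu2 x hxD]; simpa using hε
  · -- exterior point
    have hev : ∀ᶠ x in nhds w, u x = 0 :=
      Filter.eventually_of_mem (isOpen_compl_iff.mpr isClosed_closure |>.mem_nhds hw2)
        (fun x hx => hu2 x (fun hxD => hx (subset_closure hxD)))
    exact continuousAt_const.congr (hev.mono fun x hx => hx.symm)



lemma sphere_param {z w : ℂ} {ρ : ℝ} (hρ : 0 < ρ) (hw : w ∈ Metric.sphere z ρ) :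
    ∃ θ ∈ Set.Ico (0:ℝ) (2*Real.pi), w = z + ρ * Complex.exp (θ * Complex.I) := by
  have hρ' : (ρ:ℂ) ≠ 0 := by exact_mod_cast hρ.ne'
  have hwz : ‖w - z‖ = ρ := by
    simpa [Complex.dist_eq] using hw
  set a : ℂ := (w - z) / ρ with ha
  have haa : ‖a‖ = 1 := by
    rw [ha, norm_div, hwz, Complex.norm_real, Real.norm_eq_abs, abs_of_pos hρ, div_self hρ.ne']
  have hae : Complex.exp (Complex.arg a * Complex.I) = a := by
    have := Complex.norm_mul_exp_arg_mul_I a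
    rwa [haa, Complex.ofReal_one, one_mul] at this
  have hwa : w = z + ρ * a := by
    rw [ha]; field_simp; ring
  by_cases h0 : 0 ≤ Complex.arg a
  · refine ⟨Complex.arg a, ⟨h0, ?_⟩, by rw [hae, ← hwa]⟩
    have := Complex.arg_le_pi a
    nlinarith [Real.pi_pos]
  · refine ⟨Complex.arg a + 2*Real.pi, ⟨?_, ?_⟩, ?_⟩
    · have := Complex.neg_pi_lt_arg a
      nlinarith [Real.pi_pos]
    · push_neg at h0; nlinarith [Real.pi_pos]
    · rw [show ((Complex.arg a + 2*Real.pi : ℝ) : ℂ) * Complex.I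
          = Complex.arg a * Complex.I + 2*Real.pi*Complex.I by push_cast; ring,
        Complex.exp_add, Complex.exp_two_pi_mul_I, mul_one, hae, ← hwa]

lemma trig_approx (φ : ℝ → ℝ) (hφ : Continuous φ)
    (hper : ∀ θ, φ (θ + 2*Real.pi) = φ θ) {ε : ℝ} (hε : 0 < ε) :
    ∃ c : ℤ →₀ ℂ, ∀ θ ∈ Set.Ico (0:ℝ) (2*Real.pi),
      |φ θ - (∑ n ∈ c.support, c n * Complex.exp (n * θ * Complex.I)).re| < ε := by
  haveI : Fact (0 < 2*Real.pi) := ⟨by positivity⟩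
  have hf0 : ((φ 0 : ℂ)) = ((φ (2*Real.pi) : ℂ)) := by
    have := hper 0; rw [zero_add] at this; exact_mod_cast this.symm
  set F : C(AddCircle (2*Real.pi), ℂ) :=
    ⟨AddCircle.liftIco (2*Real.pi) 0 (fun θ => (φ θ : ℂ)),
     AddCircle.liftIco_zero_continuous hf0
       ((Complex.continuous_ofReal.comp hφ).continuousOn)⟩ with hF
  have hFmem : F ∈ closure ((Submodule.span ℂ (Set.range (@fourier (2*Real.pi)))) : Set _) := by
    rw [← Submodule.topologicalClosure_coe, span_fourier_closure_eq_top]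
    trivial
  obtain ⟨P, hPmem, hPdist⟩ := Metric.mem_closure_iff.mp hFmem ε hε
  obtain ⟨c, hc⟩ := Finsupp.mem_span_range_iff_exists_finsupp.mp hPmem
  have hPval : ∀ θ : ℝ, P ↑θ = ∑ n ∈ c.support, c n * Complex.exp (n * θ * Complex.I) := by
    intro θ
    rw [← hc, Finsupp.sum]
    rw [ContinuousMap.coe_sum, Finset.sum_apply]
    refine Finset.sum_congr rfl fun n _ => ?_
    have hπ : (Real.pi : ℂ) ≠ 0 := Complex.ofReal_ne_zero.mpr Real.pi_ne_zero
    have harg : 2 * (Real.pi:ℂ) * Complex.I * (n:ℂ) * (θ:ℂ) / ((2*Real.pi : ℝ) : ℂ)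
        = (n:ℂ) * (θ:ℂ) * Complex.I := by
      push_cast
      rw [div_eq_iff (by simp [hπ] : (2*(Real.pi:ℂ)) ≠ 0)]
      ring
    rw [ContinuousMap.coe_smul, Pi.smul_apply, smul_eq_mul, fourier_coe_apply, harg]
  refine ⟨c, fun θ hθ => ?_⟩
  have hFθ : F ↑θ = (φ θ : ℂ) := by
    simp only [hF, ContinuousMap.coe_mk]
    exact AddCircle.liftIco_zero_coe_apply hθ
  calc |φ θ - (∑ n ∈ c.support, c n * Complex.exp (n * θ * Complex.I)).re|
      = |((φ θ : ℂ) - P ↑θ).re| := by rw [hPval θ, Complex.sub_re, Complex.ofReal_re]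
    _ ≤ ‖(φ θ : ℂ) - P ↑θ‖ := Complex.abs_re_le_norm _
    _ = dist (F ↑θ) (P ↑θ) := by rw [Complex.dist_eq, hFθ]
    _ ≤ dist F P := ContinuousMap.dist_apply_le_dist _
    _ < ε := hPdist

variable {δ : ℝ} {g : ℂ → ℂ} {D : Set ℂ} {u : ℂ → ℝ}

lemma key (hδ : 0 < δ) (hDo : IsOpen D)
    (hgd : DifferentiableOn ℂ g D)
    (hgc : ContinuousOn g (closure D))
    (hgne : ∀ z ∈ D, g z ≠ 0)
    (hsmall : ∀ z ∈ D, ‖g z‖ < δ)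
    (hfront : ∀ z ∈ frontier D, ‖g z‖ = δ)
    (hu1 : ∀ z ∈ D, u z = Real.log (δ / ‖g z‖))
    (hu2 : ∀ z ∉ D, u z = 0)
    (hcont : Continuous u) (hnn : ∀ x, 0 ≤ u x)
    {z : ℂ} {ρ : ℝ} (hz : z ∈ D) (hρ : 0 < ρ) :
    u z ≤ (2 * Real.pi)⁻¹ *
      ∫ θ in (0:ℝ)..(2 * Real.pi), u (z + ρ * Complex.exp (θ * Complex.I)) := by
  have hπ : (0:ℝ) < Real.pi := Real.pi_pos
  have hρ' : (ρ:ℂ) ≠ 0 := by exact_mod_cast hρ.ne'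
  set φ : ℝ → ℝ := fun θ => u (z + ρ * Complex.exp (θ * Complex.I)) with hφdef
  have hφc : Continuous φ := by
    apply hcont.comp
    exact continuous_const.add (continuous_const.mul
      ((Complex.continuous_ofReal.mul continuous_const).cexp))
  have hφper : ∀ θ, φ (θ + 2*Real.pi) = φ θ := by
    intro θ
    simp only [hφdef]
    congr 2
    rw [show ((θ + 2*Real.pi : ℝ) : ℂ) * Complex.I
        = θ * Complex.I + 2*Real.pi*Complex.I by push_cast; ring,
      Complex.exp_add, Complex.exp_two_pi_mul_I, mul_one]
  have hφnn : ∀ θ, 0 ≤ φ θ := fun θ => hnn _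
  have hφint : IntervalIntegrable φ volume 0 (2*Real.pi) :=
    hφc.intervalIntegrable _ _
  refine le_of_forall_pos_le_add fun ε hε => ?_
  set ε' : ℝ := ε/2 with hε'def
  have hε' : 0 < ε' := by positivity
  obtain ⟨c, hcap⟩ := trig_approx φ hφc hφper hε'
  set q : ℝ → ℝ := fun θ => (∑ n ∈ c.support, c n * Complex.exp (n * θ * Complex.I)).re
    with hqdef
  have hSc : Continuous (fun θ : ℝ => ∑ n ∈ c.support, c n * Complex.exp (n * θ * Complex.I)) := by
    apply continuous_finset_sum
    intro n _
    exact continuous_const.mul ((continuous_const.mul Complex.continuous_ofReal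
      |>.mul continuous_const).cexp)
  have hqc : Continuous q := Complex.continuous_re.comp hSc
  set H : ℂ → ℂ := fun w => ∑ n ∈ c.support,
      (if 0 ≤ n then c n * (((w - z)/ρ)^(n.toNat))
       else (starRingEnd ℂ) (c n) * (((w - z)/ρ)^((-n).toNat))) with hHdef
  have hHdiff : Differentiable ℂ H := by
    apply Differentiable.fun_sum
    intro n _
    by_cases h0 : 0 ≤ n
    · simp only [if_pos h0]
      exact (differentiable_const _).mul (((differentiable_id.sub_const z).div_const _).pow _)
    · simp only [if_neg h0]
      exact (differentiable_const _).mul (((differentiable_id.sub_const z).div_const _).pow _)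
  -- value of Re H on the circle
  have hHreC : ∀ θ : ℝ, (H (z + ρ * Complex.exp (θ * Complex.I))).re = q θ := by
    intro θ
    have hcirc : ((z + ρ * Complex.exp (θ * Complex.I)) - z)/ρ = Complex.exp (θ * Complex.I) := by
      rw [add_sub_cancel_left, mul_div_cancel_left₀ _ hρ']
    simp only [hHdef, hqdef, Complex.re_sum]
    refine Finset.sum_congr rfl fun n _ => ?_
    rw [hcirc]
    by_cases h0 : 0 ≤ n
    · rw [if_pos h0]
      have hcast : ((n.toNat : ℕ) : ℂ) = (n : ℂ) := by
        have := Int.toNat_of_nonneg h0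
        exact_mod_cast congrArg (fun m : ℤ => (m : ℂ)) this
      rw [← Complex.exp_nat_mul, hcast, ← mul_assoc]
    · rw [if_neg h0]
      have hcast : (((-n).toNat : ℕ) : ℂ) = -(n : ℂ) := by
        have := Int.toNat_of_nonneg (by omega : 0 ≤ -n)
        exact_mod_cast congrArg (fun m : ℤ => (m : ℂ)) this
      rw [← Complex.exp_nat_mul, hcast]
      have hconj : (starRingEnd ℂ) (c n) * Complex.exp (-(n:ℂ) * (θ * Complex.I))
          = (starRingEnd ℂ) (c n * Complex.exp ((n:ℂ) * θ * Complex.I)) := by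
        rw [map_mul, ← Complex.exp_conj]
        congr 2
        simp [Complex.conj_I, Complex.conj_ofReal]
        ring
      rw [hconj, Complex.conj_re]
  have hHz : H z = c 0 := by
    simp only [hHdef]
    have hterm : ∀ n ∈ c.support,
        (if 0 ≤ n then c n * (((z - z)/ρ)^(n.toNat))
         else (starRingEnd ℂ) (c n) * (((z - z)/ρ)^((-n).toNat)))
        = if n = 0 then c n else 0 := by
      intro n _
      rw [sub_self, zero_div]
      by_cases h0 : n = 0
      · subst h0; simp
      · by_cases hpos : 0 ≤ n
        · rw [if_pos hpos, if_neg h0, zero_pow (by omega : n.toNat ≠ 0), mul_zero]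
        · rw [if_neg hpos, if_neg h0, zero_pow (by omega : (-n).toNat ≠ 0), mul_zero]
    rw [Finset.sum_congr rfl hterm, Finset.sum_ite_eq' c.support 0 (fun n => c n)]
    by_cases h : 0 ∈ c.support
    · rw [if_pos h]
    · rw [if_neg h]; exact (Finsupp.notMem_support_iff.mp h).symm
  -- the exponential integrals
  have hSint : ∀ n : ℤ, (∫ θ in (0:ℝ)..(2*Real.pi), Complex.exp ((n:ℂ) * θ * Complex.I))
      = if n = 0 then (2*Real.pi : ℂ) else 0 := by
    intro n
    by_cases h0 : n = 0
    · subst h0; simp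
    · rw [if_neg h0]
      have hrw : ∀ θ : ℝ, (n:ℂ) * θ * Complex.I = ((n:ℂ)*Complex.I) * θ := fun θ => by ring
      simp_rw [hrw]
      rw [integral_exp_mul_complex (by simp [h0, Complex.I_ne_zero])]
      have h1 : ((n:ℂ)*Complex.I) * ((2*Real.pi : ℝ):ℂ) = (n:ℂ) * (2*Real.pi*Complex.I) := by
        push_cast; ring
      rw [h1, Complex.exp_int_mul_two_pi_mul_I]
      simp
  have hqint : IntervalIntegrable q volume 0 (2*Real.pi) := hqc.intervalIntegrable _ _
  have hintq : (∫ θ in (0:ℝ)..(2*Real.pi), q θ) = 2*Real.pi * (c 0).re := by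
    have hSi : IntervalIntegrable
        (fun θ : ℝ => ∑ n ∈ c.support, c n * Complex.exp (n * θ * Complex.I))
        volume 0 (2*Real.pi) := hSc.intervalIntegrable _ _
    have hre := ContinuousLinearMap.intervalIntegral_comp_comm Complex.reCLM hSi
    have hScompute : (∫ θ in (0:ℝ)..(2*Real.pi),
        ∑ n ∈ c.support, c n * Complex.exp (n * θ * Complex.I)) = 2*Real.pi * (c 0) := by
      rw [intervalIntegral.integral_finset_sum (f := fun n (θ : ℝ) => c n * Complex.exp (n * θ * Complex.I)) (fun n _ =>
        (continuous_const.mul ((continuous_const.mul Complex.continuous_ofReal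
          |>.mul continuous_const).cexp)).intervalIntegrable _ _)]
      simp_rw [intervalIntegral.integral_const_mul, hSint, mul_ite, mul_zero]
      rw [Finset.sum_ite_eq' c.support 0 (fun n => c n * (2*Real.pi : ℂ))]
      by_cases h : 0 ∈ c.support
      · rw [if_pos h]; ring
      · rw [if_neg h, Finsupp.notMem_support_iff.mp h]; ring
    calc (∫ θ in (0:ℝ)..(2*Real.pi), q θ)
        = Complex.reCLM (∫ θ in (0:ℝ)..(2*Real.pi),
            ∑ n ∈ c.support, c n * Complex.exp (n * θ * Complex.I)) := by
          rw [← hre]; rfl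
      _ = 2*Real.pi * (c 0).re := by rw [hScompute]; simp
  -- periodicity of q and two-sided bound on Icc
  have hq2π : q (2*Real.pi) = q 0 := by
    simp only [hqdef]
    congr 1
    refine Finset.sum_congr rfl fun n _ => ?_
    have h1 : (n:ℂ) * ((2*Real.pi : ℝ):ℂ) * Complex.I = (n:ℂ) * (2*Real.pi*Complex.I) := by
      push_cast; ring
    rw [h1, Complex.exp_int_mul_two_pi_mul_I]
    simp
  have hφ2π : φ (2*Real.pi) = φ 0 := by
    have := hφper 0; rwa [zero_add] at this
  have hq_approx : ∀ θ ∈ Set.Icc (0:ℝ) (2*Real.pi), |φ θ - q θ| < ε' := by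
    intro θ hθ
    rcases lt_or_eq_of_le hθ.2 with h | h
    · exact hcap θ ⟨hθ.1, h⟩
    · rw [h, hφ2π, hq2π]
      exact hcap 0 ⟨le_refl _, by positivity⟩
  -- lower bound for Re H on the closed ball, by max modulus for exp (-H)
  have hHlb : ∀ w ∈ Metric.closedBall z ρ, -ε' ≤ (H w).re := by
    intro w hw
    have hmax : ‖Complex.exp (-(H w))‖ ≤ Real.exp ε' := by
      rw [← closure_ball z hρ.ne'] at hw
      refine Complex.norm_le_of_forall_mem_frontier_norm_le Metric.isBounded_ball
        (Complex.differentiable_exp.comp hHdiff.neg).diffContOnCl ?_ hw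
      intro ζ hζ
      rw [frontier_ball z hρ.ne'] at hζ
      obtain ⟨θ, hθmem, rfl⟩ := sphere_param hρ hζ
      simp only [Function.comp_apply]
      rw [Complex.norm_exp, Pi.neg_apply, Complex.neg_re, hHreC θ]
      apply Real.exp_le_exp.mpr
      have h1 := hq_approx θ (Set.Ico_subset_Icc_self hθmem)
      rw [abs_lt] at h1
      have := hφnn θ
      linarith
    rw [Complex.norm_exp, Complex.neg_re] at hmax
    have := Real.exp_le_exp.mp hmax
    linarith
  -- the main maximum principle application
  set E' : Set ℂ := D ∩ Metric.ball z ρ with hE'def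
  have hE'open : IsOpen E' := hDo.inter Metric.isOpen_ball
  have hE'bdd : Bornology.IsBounded E' := Metric.isBounded_ball.subset inter_subset_right
  have hzE' : z ∈ E' := ⟨hz, Metric.mem_ball_self hρ⟩
  have hclE' : closure E' ⊆ closure D ∩ Metric.closedBall z ρ := by
    intro w hw
    refine ⟨closure_mono inter_subset_left hw, ?_⟩
    exact Metric.closure_ball_subset_closedBall (closure_mono inter_subset_right hw)
  have hgcl0 : ∀ w ∈ closure D, g w ≠ 0 := by
    intro w hw h0
    by_cases hD : w ∈ D
    · exact hgne w hD h0
    · have hwf : w ∈ frontier D := by rw [hDo.frontier_eq]; exact ⟨hw, hD⟩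
      have := hfront w hwf
      rw [h0, norm_zero] at this
      linarith
  set f : ℂ → ℂ := fun w => ((δ:ℂ) / g w) * Complex.exp (-(H w)) with hfdef
  have hnormf : ∀ w, g w ≠ 0 → ‖f w‖ = (δ / ‖g w‖) * Real.exp (-(H w).re) := by
    intro w _
    rw [hfdef]
    simp only [norm_mul, norm_div, Complex.norm_exp, Complex.neg_re,
      Complex.norm_real, Real.norm_eq_abs, _root_.abs_of_pos hδ]
  have hfd : DiffContOnCl ℂ f E' := by
    constructor
    · exact ((differentiableOn_const _).div (hgd.mono inter_subset_left)
        (fun w hw => hgne _ hw.1)).mul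
        ((Complex.differentiable_exp.comp hHdiff.neg).differentiableOn)
    · exact (continuousOn_const.div (hgc.mono (fun w hw => (hclE' hw).1))
        (fun w hw => hgcl0 _ (hclE' hw).1)).mul
        ((Complex.continuous_exp.comp hHdiff.continuous.neg).continuousOn)
  have hbound : ∀ ζ ∈ frontier E', ‖f ζ‖ ≤ Real.exp ε' := by
    intro ζ hζ
    have hζc : ζ ∈ closure E' := frontier_subset_closure hζ
    have hζn : ζ ∉ E' := by
      rw [hE'open.frontier_eq] at hζ
      exact hζ.2
    obtain ⟨hζD, hζball⟩ := hclE' hζc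
    by_cases hD : ζ ∈ D
    · have hζs : ζ ∈ Metric.sphere z ρ := by
        have hnb : ζ ∉ Metric.ball z ρ := fun hb => hζn ⟨hD, hb⟩
        rw [Metric.mem_closedBall] at hζball
        rw [Metric.mem_ball, not_lt] at hnb
        exact le_antisymm hζball hnb
      obtain ⟨θ, hθmem, hζeq⟩ := sphere_param hρ hζs
      have hgpos : 0 < ‖g ζ‖ := norm_pos_iff.mpr (hgne _ hD)
      have hexp : δ / ‖g ζ‖ = Real.exp (u ζ) := by
        rw [hu1 _ hD, Real.exp_log (by positivity)]
      rw [hnormf ζ (hgne _ hD), hexp]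
      have huφ : u ζ = φ θ := by rw [hφdef]; simp only; rw [← hζeq]
      have hre : (H ζ).re = q θ := by rw [hζeq, hHreC]
      rw [huφ, hre, ← Real.exp_add]
      apply Real.exp_le_exp.mpr
      have h1 := hq_approx θ (Set.Ico_subset_Icc_self hθmem)
      rw [abs_lt] at h1
      linarith
    · have hζf : ζ ∈ frontier D := by rw [hDo.frontier_eq]; exact ⟨hζD, hD⟩
      have hgδ : ‖g ζ‖ = δ := hfront _ hζf
      rw [hnormf ζ (hgcl0 _ hζD), hgδ, div_self hδ.ne', one_mul]
      apply Real.exp_le_exp.mpr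
      have := hHlb ζ hζball
      linarith
  have hmaxz : ‖f z‖ ≤ Real.exp ε' :=
    Complex.norm_le_of_forall_mem_frontier_norm_le hE'bdd hfd hbound (subset_closure hzE')
  -- unpack
  have hgzpos : 0 < ‖g z‖ := norm_pos_iff.mpr (hgne _ hz)
  have hexpz : δ / ‖g z‖ = Real.exp (u z) := by
    rw [hu1 _ hz, Real.exp_log (by positivity)]
  rw [hnormf z (hgne _ hz), hexpz, ← Real.exp_add] at hmaxz
  have huz : u z ≤ ε' + (H z).re := by
    have := Real.exp_le_exp.mp hmaxz
    linarith
  -- integral comparison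
  have hqleφ : (∫ θ in (0:ℝ)..(2*Real.pi), q θ)
      ≤ (∫ θ in (0:ℝ)..(2*Real.pi), φ θ) + 2*Real.pi*ε' := by
    have h1 : (∫ θ in (0:ℝ)..(2*Real.pi), q θ)
        ≤ ∫ θ in (0:ℝ)..(2*Real.pi), (φ θ + ε') := by
      apply intervalIntegral.integral_mono_on (by positivity) hqint
        (hφint.add (intervalIntegrable_const))
      intro θ hθ
      have := hq_approx θ hθ
      rw [abs_lt] at this
      linarith [this.1]
    rwa [intervalIntegral.integral_add hφint intervalIntegrable_const,
      intervalIntegral.integral_const, sub_zero, smul_eq_mul] at h1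
  have hHzre : (H z).re = (2*Real.pi)⁻¹ * ∫ θ in (0:ℝ)..(2*Real.pi), q θ := by
    rw [hintq, hHz]
    field_simp
  have h2πpos : (0:ℝ) < 2*Real.pi := by positivity
  calc u z ≤ ε' + (H z).re := huz
    _ = ε' + (2*Real.pi)⁻¹ * ∫ θ in (0:ℝ)..(2*Real.pi), q θ := by rw [hHzre]
    _ ≤ ε' + (2*Real.pi)⁻¹ * ((∫ θ in (0:ℝ)..(2*Real.pi), φ θ) + 2*Real.pi*ε') := by
        have := mul_le_mul_of_nonneg_left hqleφ (le_of_lt (inv_pos.mpr h2πpos))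
        linarith
    _ = (2*Real.pi)⁻¹ * (∫ θ in (0:ℝ)..(2*Real.pi), φ θ) + 2*ε' := by
        field_simp
        ring
    _ = (2*Real.pi)⁻¹ * (∫ θ in (0:ℝ)..(2*Real.pi), φ θ) + ε := by
        rw [hε'def]; ring

end Stmt18Aux

end

/-- If `g` is holomorphic and zero-free on a component `D` of `{|g| < δ}`,
continuous up to the boundary with `|g| = δ` there, then
`u = log(δ/|g|)` on `D`, `u = 0` elsewhere, is subharmonic on `ℂ`. -/
theorem stmt_18 (δ : ℝ) (hδ : 0 < δ) (g : ℂ → ℂ) (D : Set ℂ)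
    (hDo : IsOpen D) (hDc : IsConnected D)
    (hgd : DifferentiableOn ℂ g D)
    (hgc : ContinuousOn g (closure D))
    (hgne : ∀ z ∈ D, g z ≠ 0)
    (hsmall : ∀ z ∈ D, ‖g z‖ < δ)
    (hfront : ∀ z ∈ frontier D, ‖g z‖ = δ)
    (u : ℂ → ℝ)
    (hu1 : ∀ z ∈ D, u z = Real.log (δ / ‖g z‖))
    (hu2 : ∀ z ∉ D, u z = 0) :
    SubharmonicOnUniv u := by
  have hcont : Continuous u :=
    Stmt18Aux.u_cont hδ hDo hgd hgc hgne hsmall hfront hu1 hu2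
  have hnn : ∀ x, 0 ≤ u x := Stmt18Aux.u_nonneg hδ hgne hsmall hu1 hu2
  refine ⟨hcont, fun z ρ hρ => ?_⟩
  by_cases hz : z ∈ D
  · exact Stmt18Aux.key hδ hDo hgd hgc hgne hsmall hfront hu1 hu2 hcont hnn hz hρ
  · rw [hu2 z hz]
    have h1 : (0:ℝ) ≤ ∫ θ in (0:ℝ)..(2 * Real.pi),
        u (z + ρ * Complex.exp (θ * Complex.I)) :=
      intervalIntegral.integral_nonneg (by positivity) (fun θ _ => hnn _)
    positivity
end
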